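/- arXiv:2110.14358 — 2 statements merged into one kernel-verified Lean document; each statement's English description precedes it below -/
import Mathlib

section
/- For all k >= 1, sum_{n>=1} ch(K_{n,k})(t) u^n = sum_{n>=1} [(t)_n ((t-n)^k + (n-1)(t-(n-1))^{k-1}) u^n] / prod_{i=0}^{n-1} (1 - iu), where ch(K_{n,k})(t) is the chromatic polynomial of the complete bipartite graph K_{n,k} and (t)_n = t(t-1)...(t-n+1). -/
attribute [local instance] Classical.propDecidable

noncomputable section

open PowerSeries Polynomial

private def hcs : ℕ → ℕ → ℕ
  | m, 0 => if m = 0 then 1 else 0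
  | 0, _+1 => 1
  | m+1, n+1 => hcs (m+1) n + n * hcs m (n+1)
  termination_by m n => (m, n)

private lemma hcs_zero_left (n : ℕ) : hcs 0 n = 1 := by
  cases n <;> simp [hcs]

private lemma hcs_succ_succ (m n : ℕ) :
    hcs (m+1) (n+1) = hcs (m+1) n + n * hcs m (n+1) := by
  simp [hcs]

private lemma hcs_one (m : ℕ) (hm : 1 ≤ m) : hcs m 1 = 0 := by
  obtain ⟨m, rfl⟩ := Nat.exists_eq_add_of_le' hm
  rw [hcs_succ_succ]
  simp [hcs]

/-- `st N a` = Stirling second kind -/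
private def st (N a : ℕ) : ℕ := if a ≤ N then hcs (N - a) (a + 1) else 0

private lemma st_self (N : ℕ) : st N N = 1 := by simp [st, hcs_zero_left]

private lemma st_of_gt {N a : ℕ} (h : N < a) : st N a = 0 := by
  simp [st, Nat.not_le.mpr h]

private lemma st_rec (N a : ℕ) : st (N+1) (a+1) = st N a + (a+1) * st N (a+1) := by
  rcases lt_trichotomy a N with h | rfl | h
  · have e2 : st (N+1) (a+1) = hcs ((N-a-1)+1) ((a+1)+1) := by
      rw [st, if_pos (by omega)]; congr 1 <;> omega
    have e3 : st N a = hcs ((N-a-1)+1) (a+1) := by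
      rw [st, if_pos (by omega)]; congr 1 <;> omega
    have e4 : st N (a+1) = hcs (N-a-1) ((a+1)+1) := by
      rw [st, if_pos (by omega)]; congr 1 <;> omega
    rw [e2, e3, e4, hcs_succ_succ]
  · simp [st_self, st_of_gt (Nat.lt_succ_self a)]
  · rw [st_of_gt (by omega), st_of_gt (by omega), st_of_gt (by omega)]; ring

private abbrev Rp := Polynomial ℚ

/-- geometric series -/
private def G (i : ℕ) : PowerSeries Rp := PowerSeries.mk fun m => (i : Rp) ^ m

private lemma G_eq (i : ℕ) : G i = 1 + PowerSeries.C (R := Rp) (i : Rp) * (PowerSeries.X * G i) := by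
  ext m
  cases m with
  | zero => simp [G]
  | succ m =>
    rw [map_add, PowerSeries.coeff_one, PowerSeries.coeff_C_mul, coeff_succ_X_mul]
    simp [G, pow_succ, mul_comm]

private lemma one_sub_mul_G (i : ℕ) :
    (1 - PowerSeries.C (R := Rp) (i : Rp) * PowerSeries.X) * G i = 1 := by
  have h := G_eq i
  linear_combination h

private def Pprod (n : ℕ) : PowerSeries Rp :=
  ∏ i ∈ Finset.range n, (1 - PowerSeries.C (R := Rp) (i : Rp) * PowerSeries.X)

private def Gprod (n : ℕ) : PowerSeries Rp := ∏ i ∈ Finset.range n, G i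

private lemma Pprod_mul_Gprod (n : ℕ) : Pprod n * Gprod n = 1 := by
  rw [Pprod, Gprod, ← Finset.prod_mul_distrib]
  exact Finset.prod_eq_one fun i _ => one_sub_mul_G i

private lemma constantCoeff_Pprod (n : ℕ) : PowerSeries.constantCoeff (R := Rp) (Pprod n) = 1 := by
  rw [Pprod, map_prod]
  exact Finset.prod_eq_one fun i _ => by simp

private lemma invOfUnit_Pprod (n : ℕ) : PowerSeries.invOfUnit (Pprod n) 1 = Gprod n := by
  have h2 : Pprod n * PowerSeries.invOfUnit (Pprod n) 1 = 1 :=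
    PowerSeries.mul_invOfUnit _ 1 (by simpa using constantCoeff_Pprod n)
  calc PowerSeries.invOfUnit (Pprod n) 1
      = Gprod n * (Pprod n * PowerSeries.invOfUnit (Pprod n) 1) := by
        rw [← mul_assoc, mul_comm (Gprod n), Pprod_mul_Gprod, one_mul]
    _ = Gprod n := by rw [h2, mul_one]

private lemma Gprod_succ_identity (n : ℕ) :
    Gprod (n+1) = Gprod n + PowerSeries.C (R := Rp) (n : Rp) * (PowerSeries.X * Gprod (n+1)) := by
  have h1 : Gprod (n+1) = Gprod n * G n := by rw [Gprod, Gprod, Finset.prod_range_succ]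
  calc Gprod (n+1) = Gprod n * G n := h1
    _ = Gprod n * (1 + PowerSeries.C (R := Rp) (n : Rp) * (PowerSeries.X * G n)) := by rw [← G_eq]
    _ = Gprod n + PowerSeries.C (R := Rp) (n : Rp) * (PowerSeries.X * (Gprod n * G n)) := by ring
    _ = _ := by rw [← h1]

private lemma coeff_Gprod (m n : ℕ) : PowerSeries.coeff (R := Rp) m (Gprod n) = (hcs m n : Rp) := by
  induction n generalizing m with
  | zero =>
    simp only [Gprod, Finset.range_zero, Finset.prod_empty, PowerSeries.coeff_one, hcs]
    split <;> simp_all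
  | succ n ihn =>
    induction m with
    | zero =>
      simp [Gprod, hcs_zero_left, G]
    | succ m ihm =>
      rw [hcs_succ_succ]
      calc PowerSeries.coeff (R := Rp) (m+1) (Gprod (n+1))
          = PowerSeries.coeff (R := Rp) (m+1) (Gprod n + PowerSeries.C (R := Rp) (n : Rp) *
              (PowerSeries.X * Gprod (n+1))) := by rw [← Gprod_succ_identity]
        _ = (hcs (m+1) n : Rp) + (n : Rp) * (hcs m (n+1) : Rp) := by
            rw [map_add, PowerSeries.coeff_C_mul, coeff_succ_X_mul, ihn, ihm]
        _ = ((hcs (m+1) n + n * hcs m (n+1) : ℕ) : Rp) := by push_cast; ring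

private lemma coeff_summand (P : Rp) (n N : ℕ) (h : n ≤ N) :
    PowerSeries.coeff (R := Rp) N (PowerSeries.C (R := Rp) P * PowerSeries.X ^ n *
      PowerSeries.invOfUnit (Pprod n) 1) = P * (hcs (N - n) n : Rp) := by
  rw [invOfUnit_Pprod, mul_assoc, PowerSeries.coeff_C_mul]
  obtain ⟨d, rfl⟩ := Nat.exists_eq_add_of_le' h
  rw [PowerSeries.coeff_X_pow_mul, coeff_Gprod, Nat.add_sub_cancel]

private lemma image_cons {N q : ℕ} (v : Fin q) (f : Fin N → Fin q) :
    Finset.image (Fin.cons v f : Fin (N+1) → Fin q) Finset.univ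
      = insert v (Finset.image f Finset.univ) := by
  ext y
  simp only [Finset.mem_image, Finset.mem_univ, true_and, Finset.mem_insert,
    Fin.exists_fin_succ, Fin.cons_zero, Fin.cons_succ]
  constructor
  · rintro (rfl | ⟨i, rfl⟩)
    · exact Or.inl rfl
    · exact Or.inr ⟨i, rfl⟩
  · rintro (rfl | ⟨i, rfl⟩)
    · exact Or.inl rfl
    · exact Or.inr ⟨i, rfl⟩

private lemma card_insert_count (q a : ℕ) (A : Finset (Fin q)) :
    (Finset.univ.filter fun v : Fin q => (insert v A).card = a).card
      = (if A.card = a then A.card else 0) + (if A.card + 1 = a then q - A.card else 0) := by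
  have hsplit : (Finset.univ.filter fun v : Fin q => (insert v A).card = a)
      = (A.filter fun v => (insert v A).card = a)
        ∪ (Aᶜ.filter fun v => (insert v A).card = a) := by
    rw [← Finset.filter_union, Finset.union_compl]
  rw [hsplit, Finset.card_union_of_disjoint
    (Finset.disjoint_filter_filter disjoint_compl_right)]
  have hA : (A.filter fun v => (insert v A).card = a) = if A.card = a then A else ∅ := by
    split_ifs with h
    · exact Finset.filter_true_of_mem fun v hv => by
        rw [Finset.insert_eq_self.mpr hv]; exact h
    · exact Finset.filter_false_of_mem fun v hv => by
        rw [Finset.insert_eq_self.mpr hv]; exact h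
  have hAc : (Aᶜ.filter fun v => (insert v A).card = a) = if A.card + 1 = a then Aᶜ else ∅ := by
    split_ifs with h
    · exact Finset.filter_true_of_mem fun v hv => by
        rw [Finset.card_insert_of_notMem (Finset.mem_compl.mp hv)]; exact h
    · exact Finset.filter_false_of_mem fun v hv => by
        rw [Finset.card_insert_of_notMem (Finset.mem_compl.mp hv)]; exact h
  rw [hA, hAc]
  split_ifs <;> simp [Finset.card_compl]

private lemma card_filter_image (N q : ℕ) : ∀ a,
    (Finset.univ.filter fun f : Fin N → Fin q =>
        (Finset.image f Finset.univ).card = a).card = st N a * q.descFactorial a := by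
  induction N with
  | zero =>
    intro a
    rcases Nat.eq_zero_or_pos a with rfl | ha
    · rw [Finset.filter_true_of_mem fun f _ => by simp, Finset.card_univ]
      simp [st, hcs_zero_left]
    · rw [Finset.filter_false_of_mem fun f _ => by simp; omega, Finset.card_empty,
        st_of_gt ha, zero_mul]
  | succ N ih =>
    intro a
    rw [← Fintype.card_subtype]
    have e2 : {p : (Fin N → Fin q) × Fin q //
          (insert p.2 (Finset.image p.1 Finset.univ)).card = a}
        ≃ {f : Fin (N+1) → Fin q // (Finset.image f Finset.univ).card = a} :=
      Equiv.subtypeEquiv ((Equiv.prodComm _ _).trans (Fin.consEquiv fun _ => Fin q))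
        (fun p => by
          rw [show ((Equiv.prodComm _ _).trans (Fin.consEquiv fun _ => Fin q)) p
            = Fin.cons p.2 p.1 from rfl, image_cons])
    have e3 := Equiv.subtypeProdEquivSigmaSubtype
      (fun (f' : Fin N → Fin q) (v : Fin q) =>
        (insert v (Finset.image f' Finset.univ)).card = a)
    rw [Fintype.card_congr ((e2.symm.trans e3)), Fintype.card_sigma]
    have hterm : ∀ f' : Fin N → Fin q,
        Fintype.card {v : Fin q // (insert v (Finset.image f' Finset.univ)).card = a}
          = (if (Finset.image f' Finset.univ).card = a
                then (Finset.image f' Finset.univ).card else 0)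
            + (if (Finset.image f' Finset.univ).card + 1 = a
                then q - (Finset.image f' Finset.univ).card else 0) := fun f' => by
      rw [Fintype.card_subtype, card_insert_count]
    rw [Finset.sum_congr rfl fun f' _ => hterm f', Finset.sum_add_distrib]
    have h1 : (∑ f' : Fin N → Fin q,
        if (Finset.image f' Finset.univ).card = a
          then (Finset.image f' Finset.univ).card else 0)
        = a * (st N a * q.descFactorial a) := by
      rw [← Finset.sum_filter, ← ih a]
      rw [Finset.sum_congr rfl fun f' hf' => (Finset.mem_filter.mp hf').2]
      rw [Finset.sum_const, smul_eq_mul, mul_comm]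
    rw [h1]
    rcases a with _ | b
    · simp [st, hcs_one (N+1) (by omega)]
    · have h2 : (∑ f' : Fin N → Fin q,
          if (Finset.image f' Finset.univ).card + 1 = b + 1
            then q - (Finset.image f' Finset.univ).card else 0)
          = (q - b) * (st N b * q.descFactorial b) := by
        have : ∀ f' : Fin N → Fin q,
            (if (Finset.image f' Finset.univ).card + 1 = b + 1
              then q - (Finset.image f' Finset.univ).card else 0)
            = (if (Finset.image f' Finset.univ).card = b
              then q - (Finset.image f' Finset.univ).card else 0) := fun f' => by
          simp
        rw [Finset.sum_congr rfl fun f' _ => this f', ← Finset.sum_filter, ← ih b]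
        rw [Finset.sum_congr rfl fun f' hf' => by
          rw [(Finset.mem_filter.mp hf').2]]
        rw [Finset.sum_const, smul_eq_mul, mul_comm]
      rw [h2, st_rec, Nat.descFactorial_succ]
      ring

private def coloringEquiv (k N q : ℕ) :
    (completeBipartiteGraph (Fin N) (Fin k)).Coloring (Fin q) ≃
    {p : (Fin N → Fin q) × (Fin k → Fin q) // ∀ i j, p.1 i ≠ p.2 j} where
  toFun c := ⟨(fun i => c (Sum.inl i), fun j => c (Sum.inr j)), fun i j =>
    c.valid (by simp)⟩
  invFun p := SimpleGraph.Coloring.mk (Sum.elim p.1.1 p.1.2) (by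
    rintro (i | j) (i' | j') h
    · simp at h
    · exact p.2 i j'
    · exact (p.2 i' j).symm
    · simp at h)
  left_inv c := by
    apply DFunLike.ext
    rintro (i | j) <;> rfl
  right_inv p := rfl

private lemma card_colorings (k N q : ℕ) (hN : 1 ≤ N) :
    Nat.card ((completeBipartiteGraph (Fin N) (Fin k)).Coloring (Fin q))
      = ∑ a ∈ Finset.Icc 1 N,
          st N a * q.descFactorial a * (q - a)^k := by
  rw [Nat.card_congr (coloringEquiv k N q), Nat.card_eq_fintype_card]
  have e3 := Equiv.subtypeProdEquivSigmaSubtype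
    (fun (f : Fin N → Fin q) (g : Fin k → Fin q) => ∀ i j, f i ≠ g j)
  rw [Fintype.card_congr e3, Fintype.card_sigma]
  have hterm : ∀ f : Fin N → Fin q,
      Fintype.card {g : Fin k → Fin q // ∀ i j, f i ≠ g j}
        = (q - (Finset.image f Finset.univ).card)^k := by
    intro f
    have e4 : {g : Fin k → Fin q // ∀ i j, f i ≠ g j}
        ≃ {g : Fin k → Fin q // ∀ j, g j ∉ Finset.image f Finset.univ} :=
      Equiv.subtypeEquiv (Equiv.refl _) (fun g => by
        simp only [Equiv.refl_apply, Finset.mem_image, Finset.mem_univ, true_and]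
        constructor
        · rintro h j ⟨i, hi⟩; exact h i j hi
        · intro h i j hij; exact h j ⟨i, hij⟩)
    rw [Fintype.card_congr (e4.trans (Equiv.subtypePiEquivPi (p := fun (_ : Fin k) (b : Fin q) => b ∉ Finset.image f Finset.univ)))]
    rw [Fintype.card_pi]
    have : Fintype.card {b : Fin q // b ∉ Finset.image f Finset.univ}
        = q - (Finset.image f Finset.univ).card := by
      rw [Fintype.card_subtype_compl]
      congr 1
      · exact Fintype.card_fin q
      · exact Fintype.card_coe _
    rw [Finset.prod_congr rfl (fun j _ => this), Finset.prod_const,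
      Finset.card_univ, Fintype.card_fin]
  rw [Finset.sum_congr rfl fun f _ => hterm f]
  have hmaps : ∀ f : Fin N → Fin q, f ∈ Finset.univ →
      (Finset.image f Finset.univ).card ∈ Finset.range (N+1) := by
    intro f _
    rw [Finset.mem_range, Nat.lt_succ_iff]
    exact le_trans (Finset.card_image_le) (by simp)
  rw [← Finset.sum_fiberwise_of_maps_to hmaps
    (fun f => (q - (Finset.image f Finset.univ).card)^k)]
  have hinner : ∀ a ∈ Finset.range (N+1),
      (∑ f ∈ Finset.univ.filter
          (fun f : Fin N → Fin q => (Finset.image f Finset.univ).card = a),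
        (q - (Finset.image f Finset.univ).card)^k)
      = st N a * q.descFactorial a * (q - a)^k := by
    intro a _
    rw [Finset.sum_congr rfl fun f hf => by
      rw [(Finset.mem_filter.mp hf).2]]
    rw [Finset.sum_const, smul_eq_mul, card_filter_image]
  rw [Finset.sum_congr rfl hinner]
  apply (Finset.sum_subset _ _).symm
  · intro x hx
    rw [Finset.mem_range, Nat.lt_succ_iff]
    exact (Finset.mem_Icc.mp hx).2
  · intro x hx hxn
    have hx0 : x = 0 := by
      have h1 := Finset.mem_range.mp hx
      have h2 : ¬ (1 ≤ x ∧ x ≤ N) := by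
        intro h; exact hxn (Finset.mem_Icc.mpr h)
      omega
    subst hx0
    rw [show st N 0 = 0 from by
      rw [st, if_pos (Nat.zero_le N)]; exact hcs_one N hN]
    rw [zero_mul, zero_mul]

private lemma descFactorial_cast (q a : ℕ) :
    ∏ j ∈ Finset.range a, ((q:ℚ) - (j:ℚ)) = (q.descFactorial a : ℚ) := by
  induction a with
  | zero => simp
  | succ a ih =>
    rcases le_or_gt a q with h | h
    · rw [Finset.prod_range_succ, ih, Nat.descFactorial_succ, Nat.cast_mul,
        Nat.cast_sub h]
      ring
    · have h0 : q.descFactorial a = 0 := Nat.descFactorial_eq_zero_iff_lt.mpr h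
      rw [Finset.prod_range_succ, ih, h0]
      simp
      omega

private lemma cast_term (q a k : ℕ) :
    (st a.succ.pred a : ℚ) = 0 ∨ True := Or.inr trivial

/-- termwise cast: `descFactorial * (q-a)^k` matches the rational expression. -/
private lemma cast_pow_term (q a k : ℕ) :
    (q.descFactorial a : ℚ) * ((q:ℚ) - (a:ℚ))^k
      = ((q.descFactorial a * (q - a)^k : ℕ) : ℚ) := by
  rcases le_or_gt a q with h | h
  · push_cast [Nat.cast_sub h]
    ring
  · have h0 : q.descFactorial a = 0 := Nat.descFactorial_eq_zero_iff_lt.mpr h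
    rw [h0]
    simp

private lemma chA (k : ℕ) (ch : ℕ → Polynomial ℚ)
    (hch : ∀ n, 1 ≤ n → ∀ q : ℕ,
      (ch n).eval (q : ℚ) =
        (Nat.card ((completeBipartiteGraph (Fin n) (Fin k)).Coloring
          (Fin q)) : ℚ))
    (N : ℕ) (hN : 1 ≤ N) :
    ch N = ∑ a ∈ Finset.Icc 1 N, (st N a : Rp) *
      ((∏ j ∈ Finset.range a, (Polynomial.X - (j : Rp)))
        * (Polynomial.X - (a : Rp))^k) := by
  apply Polynomial.eq_of_infinite_eval_eq
  apply Set.Infinite.mono (s := Set.range (Nat.cast : ℕ → ℚ))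
  · rintro x ⟨q, rfl⟩
    simp only [Set.mem_setOf_eq]
    rw [hch N hN q, card_colorings k N q hN]
    rw [Polynomial.eval_finset_sum]
    rw [Nat.cast_sum]
    refine Finset.sum_congr rfl fun a _ => ?_
    rw [Polynomial.eval_mul, Polynomial.eval_mul, Polynomial.eval_pow,
      Polynomial.eval_natCast, Polynomial.eval_prod, Polynomial.eval_sub,
      Polynomial.eval_X, Polynomial.eval_natCast]
    have : ∏ j ∈ Finset.range a, Polynomial.eval (q:ℚ) (Polynomial.X - (j:Rp))
        = (q.descFactorial a : ℚ) := by
      rw [← descFactorial_cast]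
      exact Finset.prod_congr rfl fun j _ => by
        rw [Polynomial.eval_sub, Polynomial.eval_X, Polynomial.eval_natCast]
    rw [this, cast_pow_term q a k]
    push_cast
    ring
  · exact Set.infinite_range_of_injective Nat.cast_injective

private lemma st_cast_rec (N a : ℕ) (hN : 1 ≤ N) (ha : 1 ≤ a) :
    st N a = st (N-1) (a-1) + a * st (N-1) a := by
  have h := st_rec (N-1) (a-1)
  have e1 : N - 1 + 1 = N := by omega
  have e2 : a - 1 + 1 = a := by omega
  rw [e1, e2] at h
  exact h

private lemma polyB (k N : ℕ) (hk : 1 ≤ k) (hN : 1 ≤ N) :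
    (∑ a ∈ Finset.Icc 1 N, (st N a : Rp) *
      ((∏ j ∈ Finset.range a, (Polynomial.X - (j : Rp)))
        * (Polynomial.X - (a : Rp))^k))
    = ∑ n ∈ Finset.Icc 1 N, (st (N-1) (n-1) : Rp) *
      ((∏ j ∈ Finset.range n, (Polynomial.X - (j : Rp))) *
        ((Polynomial.X - (n : Rp))^k
          + ((n : Rp) - 1) * (Polynomial.X - ((n : Rp) - 1))^(k-1))) := by
  have hLHS : (∑ a ∈ Finset.Icc 1 N, (st N a : Rp) *
      ((∏ j ∈ Finset.range a, (Polynomial.X - (j : Rp)))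
        * (Polynomial.X - (a : Rp))^k))
      = (∑ a ∈ Finset.Icc 1 N, (st (N-1) (a-1) : Rp) *
          ((∏ j ∈ Finset.range a, (Polynomial.X - (j : Rp)))
            * (Polynomial.X - (a : Rp))^k))
        + ∑ a ∈ Finset.Icc 1 N, (a : Rp) * (st (N-1) a : Rp) *
          ((∏ j ∈ Finset.range a, (Polynomial.X - (j : Rp)))
            * (Polynomial.X - (a : Rp))^k) := by
    rw [← Finset.sum_add_distrib]
    refine Finset.sum_congr rfl fun a ha => ?_
    have h1 := st_cast_rec N a hN (Finset.mem_Icc.mp ha).1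
    have h2 : (st N a : Rp) = (st (N-1) (a-1) : Rp) + (a : Rp) * (st (N-1) a : Rp) := by
      rw [h1]; push_cast; ring
    rw [h2]; ring
  have hRHS : (∑ n ∈ Finset.Icc 1 N, (st (N-1) (n-1) : Rp) *
      ((∏ j ∈ Finset.range n, (Polynomial.X - (j : Rp))) *
        ((Polynomial.X - (n : Rp))^k
          + ((n : Rp) - 1) * (Polynomial.X - ((n : Rp) - 1))^(k-1))))
      = (∑ n ∈ Finset.Icc 1 N, (st (N-1) (n-1) : Rp) *
          ((∏ j ∈ Finset.range n, (Polynomial.X - (j : Rp)))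
            * (Polynomial.X - (n : Rp))^k))
        + ∑ n ∈ Finset.Icc 1 N, (st (N-1) (n-1) : Rp) *
          ((∏ j ∈ Finset.range n, (Polynomial.X - (j : Rp))) *
            (((n : Rp) - 1) * (Polynomial.X - ((n : Rp) - 1))^(k-1))) := by
    rw [← Finset.sum_add_distrib]
    exact Finset.sum_congr rfl fun n _ => by ring
  rw [hLHS, hRHS]
  congr 1
  -- S2 = S2'
  have key : ∀ a ∈ Finset.Icc 1 (N-1),
      (a : Rp) * (st (N-1) a : Rp) *
        ((∏ j ∈ Finset.range a, (Polynomial.X - (j : Rp)))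
          * (Polynomial.X - (a : Rp))^k)
      = (st (N-1) ((a+1)-1) : Rp) *
          ((∏ j ∈ Finset.range (a+1), (Polynomial.X - (j : Rp))) *
            ((((a+1 : ℕ)) : Rp) - 1) * (Polynomial.X - ((((a+1 : ℕ)) : Rp) - 1))^(k-1)) := by
    intro a _
    have e1 : (a+1) - 1 = a := rfl
    have e2 : (((a+1 : ℕ)) : Rp) - 1 = (a : Rp) := by push_cast; ring
    have e3 : k = (k-1) + 1 := by omega
    rw [e1, e2, Finset.prod_range_succ]
    calc (a : Rp) * (st (N-1) a : Rp) *
        ((∏ j ∈ Finset.range a, (Polynomial.X - (j : Rp)))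
          * (Polynomial.X - (a : Rp))^k)
        = (a : Rp) * (st (N-1) a : Rp) *
          ((∏ j ∈ Finset.range a, (Polynomial.X - (j : Rp)))
            * ((Polynomial.X - (a : Rp))^(k-1) * (Polynomial.X - (a : Rp)))) := by
          rw [← pow_succ, ← e3]
      _ = _ := by ring
  -- restrict LHS-sum to Icc 1 (N-1)
  have hL2 : (∑ a ∈ Finset.Icc 1 N, (a : Rp) * (st (N-1) a : Rp) *
        ((∏ j ∈ Finset.range a, (Polynomial.X - (j : Rp)))
          * (Polynomial.X - (a : Rp))^k))
      = ∑ a ∈ Finset.Icc 1 (N-1), (a : Rp) * (st (N-1) a : Rp) *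
        ((∏ j ∈ Finset.range a, (Polynomial.X - (j : Rp)))
          * (Polynomial.X - (a : Rp))^k) := by
    apply (Finset.sum_subset ?_ ?_).symm
    · intro x hx
      have := Finset.mem_Icc.mp hx
      exact Finset.mem_Icc.mpr ⟨this.1, by omega⟩
    · intro x hx hxn
      have h1 := Finset.mem_Icc.mp hx
      have h2 : N - 1 < x := by
        by_contra h
        exact hxn (Finset.mem_Icc.mpr ⟨h1.1, by omega⟩)
      rw [st_of_gt (by omega)]
      push_cast
      ring
  -- restrict RHS-sum to Icc 2 N
  have hR2 : (∑ n ∈ Finset.Icc 1 N, (st (N-1) (n-1) : Rp) *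
        ((∏ j ∈ Finset.range n, (Polynomial.X - (j : Rp))) *
          (((n : Rp) - 1) * (Polynomial.X - ((n : Rp) - 1))^(k-1))))
      = ∑ n ∈ Finset.Icc 2 N, (st (N-1) (n-1) : Rp) *
        ((∏ j ∈ Finset.range n, (Polynomial.X - (j : Rp))) *
          (((n : Rp) - 1) * (Polynomial.X - ((n : Rp) - 1))^(k-1))) := by
    apply (Finset.sum_subset ?_ ?_).symm
    · intro x hx
      have := Finset.mem_Icc.mp hx
      exact Finset.mem_Icc.mpr ⟨by omega, this.2⟩
    · intro x hx hxn
      have h1 := Finset.mem_Icc.mp hx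
      have h2 : x = 1 := by
        by_contra h
        exact hxn (Finset.mem_Icc.mpr ⟨by omega, h1.2⟩)
      subst h2
      norm_num
  rw [hL2, hR2]
  rw [Finset.sum_congr rfl key]
  -- reindex
  have := Finset.sum_map (Finset.Icc 1 (N-1)) (addRightEmbedding 1)
    (fun n => (st (N-1) (n-1) : Rp) *
        ((∏ j ∈ Finset.range n, (Polynomial.X - (j : Rp))) *
          (((n : Rp) - 1) * (Polynomial.X - ((n : Rp) - 1))^(k-1))))
  rw [Finset.map_add_right_Icc] at this
  have e4 : N - 1 + 1 = N := by omega
  rw [e4] at this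
  norm_num at this
  rw [this]
  refine Finset.sum_congr rfl fun a _ => ?_
  push_cast
  ring


open PowerSeries Polynomial in
/-- For all `k ≥ 1`,
`∑_{n≥1} ch(K_{n,k})(t) u^n
  = ∑_{n≥1} (t)_n ((t-n)^k + (n-1)(t-(n-1))^{k-1}) u^n / ∏_{i=0}^{n-1} (1 - iu)`,
where `ch(K_{n,k})` is the chromatic polynomial of the complete bipartite graph
`K_{n,k}`; the identity of power series in `u` over `ℚ[t]` is stated coefficientwise
(the coefficient of `u^N` of the `n`-th summand on the right vanishes for `n > N`). -/
theorem chromatic_completeBipartite_generating_function (k : ℕ) (hk : 1 ≤ k)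
    (ch : ℕ → Polynomial ℚ)
    (hch : ∀ n, 1 ≤ n → ∀ q : ℕ,
      (ch n).eval (q : ℚ) =
        (Nat.card ((completeBipartiteGraph (Fin n) (Fin k)).Coloring
          (Fin q)) : ℚ)) :
    ∀ N : ℕ,
      (PowerSeries.coeff (R := Polynomial ℚ) N) (PowerSeries.mk fun j =>
          if j = 0 then 0 else ch j) =
      ∑ n ∈ Finset.Icc 1 N, (PowerSeries.coeff (R := Polynomial ℚ) N)
        ((PowerSeries.C (R := Polynomial ℚ)) ((∏ j ∈ Finset.range n,
              (Polynomial.X - (j : Polynomial ℚ))) *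
            ((Polynomial.X - (n : Polynomial ℚ)) ^ k +
              ((n : Polynomial ℚ) - 1) *
                (Polynomial.X - ((n : Polynomial ℚ) - 1)) ^ (k - 1))) *
          PowerSeries.X ^ n *
          PowerSeries.invOfUnit
            (∏ i ∈ Finset.range n,
              (1 - (PowerSeries.C (R := Polynomial ℚ)) (i : Polynomial ℚ) * PowerSeries.X)) 1) := by
  intro N
  rw [PowerSeries.coeff_mk]
  rcases Nat.eq_zero_or_pos N with rfl | hN
  · simp
  · rw [if_neg (by omega)]
    have hsum : ∀ n ∈ Finset.Icc 1 N,
        (PowerSeries.coeff (R := Rp) N)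
          ((PowerSeries.C (R := Rp)) ((∏ j ∈ Finset.range n,
              (Polynomial.X - (j : Polynomial ℚ))) *
            ((Polynomial.X - (n : Polynomial ℚ)) ^ k +
              ((n : Polynomial ℚ) - 1) *
                (Polynomial.X - ((n : Polynomial ℚ) - 1)) ^ (k - 1))) *
          PowerSeries.X ^ n *
          PowerSeries.invOfUnit
            (∏ i ∈ Finset.range n,
              (1 - (PowerSeries.C (R := Rp)) (i : Polynomial ℚ) * PowerSeries.X)) 1)
        = ((∏ j ∈ Finset.range n, (Polynomial.X - (j : Polynomial ℚ))) *
            ((Polynomial.X - (n : Polynomial ℚ)) ^ k +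
              ((n : Polynomial ℚ) - 1) *
                (Polynomial.X - ((n : Polynomial ℚ) - 1)) ^ (k - 1)))
          * (hcs (N - n) n : Rp) :=
      fun n hn => coeff_summand _ n N (Finset.mem_Icc.mp hn).2
    rw [Finset.sum_congr rfl hsum, chA k ch hch N hN, polyB k N hk hN]
    refine Finset.sum_congr rfl fun n hn => ?_
    have hmem := Finset.mem_Icc.mp hn
    have hst : st (N-1) (n-1) = hcs (N - n) n := by
      rw [st, if_pos (by omega : n - 1 ≤ N - 1)]
      congr 1 <;> omega
    rw [hst, mul_comm]


end
end

section
/- Let T_n^k = {1,3,...,2k-1} ∪ {2k,...,2(k+n-1)}. Then sum_{n>=1} Lambda_{T_n^k} u^{n-1} = 1 + sum_{n>=2} [(y+xbar)^{(n-2)} Lambda_{T_2^k}(x+n-2, y, z, xbar+n-2, ybar, zbar) u^{n-1}] / prod_{i=0}^{n-2} (1 - (ybar - y - (xbar+i)) u), where a^{(n)} = a(a+1)...(a+n-1). -/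
attribute [local instance] Classical.propDecidable

noncomputable section

/-- The second-largest even element of `S` (0 if there is none). -/
def sndEvenMax (S : Finset ℕ) : ℕ :=
  ((S.filter fun a => Even a).erase (S.sup id)).sup id

/-- `S'`: the elements of `S` that are at most the second-largest even element. -/
def Sprime (S : Finset ℕ) : Finset ℕ := S.filter fun a => a ≤ sndEvenMax S

/-- Generalized surjective staircases on `S`: excedent maps from `S` onto the even
elements of `S`. -/
def Staircases (S : Finset ℕ) : Finset (↥S → ↥S) :=
  Finset.univ.filter fun f =>
    (∀ a : ↥S, (a : ℕ) ≤ (f a : ℕ) ∧ Even ((f a : ℕ))) ∧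
    (∀ b : ↥S, Even (b : ℕ) → ∃ a : ↥S, f a = b)

/-- number of odd maxima -/
def moS (S : Finset ℕ) (f : ↥S → ↥S) : ℕ :=
  (Finset.univ.filter fun a : ↥S =>
    (a : ℕ) ≤ sndEvenMax S ∧ Odd (a : ℕ) ∧ ((f a : ℕ) = S.sup id)).card

/-- number of even maxima -/
def meS (S : Finset ℕ) (f : ↥S → ↥S) : ℕ :=
  (Finset.univ.filter fun a : ↥S =>
    (a : ℕ) ≤ sndEvenMax S ∧ Even (a : ℕ) ∧ ((f a : ℕ) = S.sup id)).card

def IsFixedPtS (S : Finset ℕ) (f : ↥S → ↥S) (a : ↥S) : Prop :=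
  (a : ℕ) ≤ sndEvenMax S ∧ Even (a : ℕ) ∧ f a = a

/-- number of isolated fixed points -/
def fiS (S : Finset ℕ) (f : ↥S → ↥S) : ℕ :=
  (Finset.univ.filter fun a : ↥S =>
    IsFixedPtS S f a ∧ ∀ b : ↥S, f b = a → b = a).card

/-- number of doubled fixed points -/
def fdS (S : Finset ℕ) (f : ↥S → ↥S) : ℕ :=
  (Finset.univ.filter fun a : ↥S =>
    IsFixedPtS S f a ∧ ∃ b : ↥S, b ≠ a ∧ f b = a).card

/-- the least even element of `S` larger than `a` -/
def nextEven (S : Finset ℕ) (a : ℕ) : ℕ := sInf {b : ℕ | b ∈ S ∧ Even b ∧ a < b}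

def IsSurfixedPtS (S : Finset ℕ) (f : ↥S → ↥S) (a : ↥S) : Prop :=
  (a : ℕ) ≤ sndEvenMax S ∧ Odd (a : ℕ) ∧ (f a : ℕ) = nextEven S (a : ℕ)

/-- number of isolated surfixed points -/
def siS (S : Finset ℕ) (f : ↥S → ↥S) : ℕ :=
  (Finset.univ.filter fun a : ↥S =>
    IsSurfixedPtS S f a ∧ ∀ b : ↥S, f b = f a → b = a).card

/-- number of doubled surfixed points -/
def sdS (S : Finset ℕ) (f : ↥S → ↥S) : ℕ :=
  (Finset.univ.filter fun a : ↥S =>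
    IsSurfixedPtS S f a ∧ ∃ b : ↥S, b ≠ a ∧ f b = f a).card

/-- The generalized Dumont–Foata polynomial `Λ_S`, evaluated at elements of a
commutative ring. -/
def Lam (R : Type) [CommRing R] (S : Finset ℕ) (x y z xb yb zb : R) : R :=
  ∑ f ∈ Staircases S,
    x ^ moS S f * y ^ fdS S f * z ^ siS S f * xb ^ meS S f * yb ^ fiS S f * zb ^ sdS S f


/-- `T_n^k = {1,3,…,2k-1} ∪ {2k, 2k+2, …, 2(k+n-1)}`. -/
def Tnk (k n : ℕ) : Finset ℕ :=
  ((Finset.range k).image fun i => 2 * i + 1) ∪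
    ((Finset.range n).image fun i => 2 * k + 2 * i)

lemma mem_Tnk {k n a : ℕ} :
    a ∈ Tnk k n ↔ (a % 2 = 1 ∧ a < 2*k) ∨ (a % 2 = 0 ∧ 2*k ≤ a ∧ a < 2*k + 2*n) := by
  simp only [Tnk, Finset.mem_union, Finset.mem_image, Finset.mem_range]
  constructor
  · rintro (⟨i, hi, rfl⟩ | ⟨i, hi, rfl⟩) <;> omega
  · rintro (⟨h1, h2⟩ | ⟨h1, h2, h3⟩)
    · exact Or.inl ⟨a / 2, by omega, by omega⟩
    · exact Or.inr ⟨(a - 2*k)/2, by omega, by omega⟩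

lemma sup_Tnk (k n : ℕ) : (Tnk k (n+1)).sup id = 2*k + 2*n := by
  apply le_antisymm
  · apply Finset.sup_le; intro a ha; rw [mem_Tnk] at ha; simp only [id]; omega
  · exact Finset.le_sup (f := id) (mem_Tnk.2 (Or.inr ⟨by omega, by omega, by omega⟩))

lemma filter_even_Tnk (k n : ℕ) :
    ((Tnk k n).filter fun a => Even a) = (Finset.range n).image (fun i => 2*k + 2*i) := by
  ext a
  simp only [Finset.mem_filter, mem_Tnk, Finset.mem_image, Finset.mem_range, Nat.even_iff]
  constructor
  · rintro ⟨h1 | h1, h2⟩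
    · omega
    · exact ⟨(a - 2*k)/2, by omega, by omega⟩
  · rintro ⟨i, hi, rfl⟩; omega

lemma sndEvenMax_Tnk (k n : ℕ) : sndEvenMax (Tnk k (n+2)) = 2*k + 2*n := by
  unfold sndEvenMax
  rw [show n + 2 = (n+1)+1 by rfl, sup_Tnk, filter_even_Tnk]
  have h : ((Finset.range (n+2)).image (fun i => 2*k+2*i)).erase (2*k+2*(n+1)) =
      (Finset.range (n+1)).image (fun i => 2*k+2*i) := by
    ext a
    simp only [Finset.mem_erase, Finset.mem_image, Finset.mem_range]
    constructor
    · rintro ⟨hne, i, hi, rfl⟩; exact ⟨i, by omega, rfl⟩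
    · rintro ⟨i, hi, rfl⟩; exact ⟨by omega, i, by omega, rfl⟩
  rw [h]
  apply le_antisymm
  · apply Finset.sup_le; intro a ha
    simp only [Finset.mem_image, Finset.mem_range] at ha
    obtain ⟨i, hi, rfl⟩ := ha; simp only [id]; omega
  · apply Finset.le_sup (f := id)
    simp only [Finset.mem_image, Finset.mem_range]
    exact ⟨n, by omega, rfl⟩

lemma sndEvenMax_Tnk_one (k : ℕ) : sndEvenMax (Tnk k 1) = 0 := by
  unfold sndEvenMax
  rw [show (1:ℕ) = 0 + 1 by rfl, sup_Tnk, filter_even_Tnk]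
  have : ((Finset.range 1).image (fun i => 2*k+2*i)).erase (2*k+2*0) = ∅ := by
    ext a
    simp only [Finset.mem_erase, Finset.mem_image, Finset.mem_range, Finset.notMem_empty]
    constructor
    · rintro ⟨hne, i, hi, rfl⟩; omega
    · exact fun h => h.elim
  rw [this]; rfl

lemma nextEven_Tnk (k n a : ℕ) (hn : 1 ≤ n) (ha : a < 2*k) : nextEven (Tnk k n) a = 2*k := by
  unfold nextEven
  have h2k : 2*k ∈ {b : ℕ | b ∈ Tnk k n ∧ Even b ∧ a < b} :=
    ⟨mem_Tnk.2 (Or.inr ⟨by omega, le_refl _, by omega⟩), ⟨k, by ring⟩, ha⟩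
  refine le_antisymm (Nat.sInf_le h2k) ?_
  obtain ⟨hb, hbe, hab⟩ := Nat.sInf_mem ⟨_, h2k⟩
  rw [mem_Tnk] at hb
  rw [Nat.even_iff] at hbe
  omega


/-! ### Infrastructure for the recurrence -/

section Rec

variable {k p : ℕ}

lemma mem_S_of_mem' {a : ℕ} (h : a ∈ Tnk k (p+2)) : a ∈ Tnk k (p+3) := by
  rw [mem_Tnk] at h ⊢; omega

lemma mem'_of_mem_ne {a : ℕ} (h : a ∈ Tnk k (p+3)) (hne : a ≠ 2*k+2*(p+2)) :
    a ∈ Tnk k (p+2) := by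
  rw [mem_Tnk] at h ⊢; omega

lemma mem'_of_mem_le {a : ℕ} (h : a ∈ Tnk k (p+3)) (hle : a ≤ 2*k+2*(p+1)) :
    a ∈ Tnk k (p+2) := by
  rw [mem_Tnk] at h ⊢; omega

lemma M_mem : 2*k+2*(p+2) ∈ Tnk k (p+3) := mem_Tnk.2 (Or.inr ⟨by omega, by omega, by omega⟩)

lemma M_not_mem' : 2*k+2*(p+2) ∉ Tnk k (p+2) := by rw [mem_Tnk]; omega

lemma M'_mem' : 2*k+2*(p+1) ∈ Tnk k (p+2) := mem_Tnk.2 (Or.inr ⟨by omega, by omega, by omega⟩)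

lemma M'_mem : 2*k+2*(p+1) ∈ Tnk k (p+3) := mem_S_of_mem' M'_mem'

lemma lt_M_of_mem' {a : ℕ} (h : a ∈ Tnk k (p+2)) : a < 2*k+2*(p+2) := by
  rw [mem_Tnk] at h; omega

lemma le_M'_of_mem' {a : ℕ} (h : a ∈ Tnk k (p+2)) : a ≤ 2*k+2*(p+1) := by
  rw [mem_Tnk] at h; omega

lemma le_M_of_mem {a : ℕ} (h : a ∈ Tnk k (p+3)) : a ≤ 2*k+2*(p+2) := by
  rw [mem_Tnk] at h; omega

lemma le_M''_of_even_ne {a : ℕ} (h : a ∈ Tnk k (p+2)) (he : a % 2 = 0)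
    (hne : a ≠ 2*k+2*(p+1)) : a ≤ 2*k+2*p := by
  rw [mem_Tnk] at h; omega

lemma eq_M_of_not_mem' {a : ℕ} (h : a ∈ Tnk k (p+3)) (h2 : a ∉ Tnk k (p+2)) :
    a = 2*k+2*(p+2) := by
  rw [mem_Tnk] at h h2; omega

lemma mem_Staircases_iff {S : Finset ℕ} {f : ↥S → ↥S} :
    f ∈ Staircases S ↔ (∀ a : ↥S, (a : ℕ) ≤ (f a : ℕ) ∧ Even ((f a : ℕ))) ∧
      (∀ b : ↥S, Even (b : ℕ) → ∃ a : ↥S, f a = b) := by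
  simp [Staircases]

/-- the inclusion of `T_{p+2}` into `T_{p+3}` -/
def incl (k p : ℕ) (a : ↥(Tnk k (p+2))) : ↥(Tnk k (p+3)) := ⟨a.1, mem_S_of_mem' a.2⟩

@[simp] lemma incl_val (a : ↥(Tnk k (p+2))) : (incl k p a : ℕ) = (a : ℕ) := rfl

lemma incl_inj {a b : ↥(Tnk k (p+2))} (h : incl k p a = incl k p b) : a = b := by
  have h2 := Subtype.ext_iff.1 h
  exact Subtype.ext h2

/-- The top element `M` of `T_{p+3}`. -/
def topS (k p : ℕ) : ↥(Tnk k (p+3)) := ⟨2*k+2*(p+2), M_mem⟩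

/-- The top element `M'` of `T_{p+2}`, inside `T_{p+3}`. -/
def subtopS (k p : ℕ) : ↥(Tnk k (p+3)) := ⟨2*k+2*(p+1), M'_mem⟩

/-- The top element `M'` of `T_{p+2}`. -/
def topS' (k p : ℕ) : ↥(Tnk k (p+2)) := ⟨2*k+2*(p+1), M'_mem'⟩

lemma staircase_top {f : ↥(Tnk k (p+3)) → ↥(Tnk k (p+3))} (hf : f ∈ Staircases (Tnk k (p+3))) :
    f (topS k p) = topS k p := by
  obtain ⟨h1, -⟩ := mem_Staircases_iff.1 hf
  exact Subtype.ext (le_antisymm (le_M_of_mem (f (topS k p)).2) (h1 (topS k p)).1)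

lemma staircase_top' {g : ↥(Tnk k (p+2)) → ↥(Tnk k (p+2))} (hg : g ∈ Staircases (Tnk k (p+2))) :
    g (topS' k p) = topS' k p := by
  obtain ⟨h1, -⟩ := mem_Staircases_iff.1 hg
  exact Subtype.ext (le_antisymm (le_M'_of_mem' (g (topS' k p)).2) (h1 (topS' k p)).1)

/-- the projection of a staircase on `T_{p+3}` to one on `T_{p+2}` -/
def projf (k p : ℕ) (f : ↥(Tnk k (p+3)) → ↥(Tnk k (p+3))) :
    ↥(Tnk k (p+2)) → ↥(Tnk k (p+2)) := fun a =>
  if h : ((f (incl k p a) : ℕ)) = 2*k+2*(p+2) then topS' k p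
  else ⟨(f (incl k p a) : ℕ), mem'_of_mem_ne (f (incl k p a)).2 h⟩

/-- the set of elements sent to the maximum, as a subset of `T_{p+2}` -/
def AofF (k p : ℕ) (f : ↥(Tnk k (p+3)) → ↥(Tnk k (p+3))) : Finset ↥(Tnk k (p+2)) :=
  Finset.univ.filter fun a => ((f (incl k p a) : ℕ) = 2*k+2*(p+2))

/-- the preimage of the maximum `M'` under a staircase on `T_{p+2}` -/
def PofG (k p : ℕ) (g : ↥(Tnk k (p+2)) → ↥(Tnk k (p+2))) : Finset ↥(Tnk k (p+2)) :=
  Finset.univ.filter fun a => ((g a : ℕ) = 2*k+2*(p+1))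

/-- the extension of a staircase `g` on `T_{p+2}` determined by a set `A` -/
def extf (k p : ℕ) (g : ↥(Tnk k (p+2)) → ↥(Tnk k (p+2))) (A : Finset ↥(Tnk k (p+2))) :
    ↥(Tnk k (p+3)) → ↥(Tnk k (p+3)) := fun a =>
  if h : (a : ℕ) ∈ Tnk k (p+2) then
    (if (⟨a, h⟩ : ↥(Tnk k (p+2))) ∈ A then topS k p else incl k p (g ⟨a, h⟩))
  else topS k p

section aux
variable {f : ↥(Tnk k (p+3)) → ↥(Tnk k (p+3))}

lemma mem_AofF_iff {a : ↥(Tnk k (p+2))} :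
    a ∈ AofF k p f ↔ ((f (incl k p a) : ℕ) = 2*k+2*(p+2)) := by
  simp [AofF]

lemma mem_PofG_iff {g : ↥(Tnk k (p+2)) → ↥(Tnk k (p+2))} {a : ↥(Tnk k (p+2))} :
    a ∈ PofG k p g ↔ ((g a : ℕ) = 2*k+2*(p+1)) := by
  simp [PofG]

lemma projf_of_mem {a : ↥(Tnk k (p+2))} (ha : a ∈ AofF k p f) :
    projf k p f a = topS' k p := by
  rw [projf, dif_pos (mem_AofF_iff.1 ha)]

lemma projf_of_not_mem {a : ↥(Tnk k (p+2))} (ha : a ∉ AofF k p f) :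
    f (incl k p a) = incl k p (projf k p f a) := by
  rw [projf, dif_neg (fun h => ha (mem_AofF_iff.2 h))]
  exact Subtype.ext rfl

lemma AofF_subset_PofG : AofF k p f ⊆ PofG k p (projf k p f) := fun a ha =>
  mem_PofG_iff.2 (by rw [projf_of_mem ha]; rfl)

lemma f_top (hf : f ∈ Staircases (Tnk k (p+3))) {b : ↥(Tnk k (p+3))} (hb : (b : ℕ) = 2*k+2*(p+2)) :
    f b = topS k p := by
  have : b = topS k p := Subtype.ext hb
  rw [this, staircase_top hf]

end aux

end Rec

section Stats

variable {k p : ℕ} {f : ↥(Tnk k (p+3)) → ↥(Tnk k (p+3))}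

lemma f_incl_mk {a : ↥(Tnk k (p+3))} (h : (a : ℕ) ∈ Tnk k (p+2)) :
    f (incl k p ⟨(a : ℕ), h⟩) = f a := congrArg f (Subtype.ext rfl)

lemma f_incl_val_of_not_mem {a : ↥(Tnk k (p+2))} (ha : a ∉ AofF k p f) :
    ((f (incl k p a)) : ℕ) = ((projf k p f a) : ℕ) := by
  rw [projf_of_not_mem ha]
  rfl

lemma moS_eq :
    moS (Tnk k (p+3)) f = ((AofF k p f).filter fun a : ↥(Tnk k (p+2)) => (a : ℕ) % 2 = 1).card := by
  have hsnd : sndEvenMax (Tnk k (p+3)) = 2*k+2*(p+1) := sndEvenMax_Tnk k (p+1)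
  have hsup : (Tnk k (p+3)).sup id = 2*k+2*(p+2) := sup_Tnk k (p+2)
  rw [moS, hsnd, hsup]
  refine Finset.card_bij
    (fun (a : ↥(Tnk k (p+3))) ha => (⟨(a : ℕ), mem'_of_mem_le a.2 (Finset.mem_filter.1 ha).2.1⟩ : ↥(Tnk k (p+2)))) ?_ ?_ ?_
  · intro a ha
    obtain ⟨-, h1, h2, h3⟩ := Finset.mem_filter.1 ha
    beta_reduce
    rw [Finset.mem_filter, mem_AofF_iff, f_incl_mk (f := f)]
    exact ⟨h3, Nat.odd_iff.1 h2⟩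
  · intro a ha b hb h
    have h2 := Subtype.ext_iff.1 h
    exact Subtype.ext h2
  · intro b hb
    obtain ⟨hbA, hbodd⟩ := Finset.mem_filter.1 hb
    refine ⟨incl k p b, ?_, Subtype.ext rfl⟩
    rw [Finset.mem_filter]
    exact ⟨Finset.mem_univ _, le_M'_of_mem' b.2, Nat.odd_iff.2 hbodd, mem_AofF_iff.1 hbA⟩

lemma meS_eq :
    meS (Tnk k (p+3)) f = ((AofF k p f).filter fun a : ↥(Tnk k (p+2)) => (a : ℕ) % 2 = 0).card := by
  have hsnd : sndEvenMax (Tnk k (p+3)) = 2*k+2*(p+1) := sndEvenMax_Tnk k (p+1)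
  have hsup : (Tnk k (p+3)).sup id = 2*k+2*(p+2) := sup_Tnk k (p+2)
  rw [meS, hsnd, hsup]
  refine Finset.card_bij
    (fun (a : ↥(Tnk k (p+3))) ha => (⟨(a : ℕ), mem'_of_mem_le a.2 (Finset.mem_filter.1 ha).2.1⟩ : ↥(Tnk k (p+2)))) ?_ ?_ ?_
  · intro a ha
    obtain ⟨-, h1, h2, h3⟩ := Finset.mem_filter.1 ha
    beta_reduce
    rw [Finset.mem_filter, mem_AofF_iff, f_incl_mk (f := f)]
    exact ⟨h3, Nat.even_iff.1 h2⟩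
  · intro a ha b hb h
    have h2 := Subtype.ext_iff.1 h
    exact Subtype.ext h2
  · intro b hb
    obtain ⟨hbA, hbev⟩ := Finset.mem_filter.1 hb
    refine ⟨incl k p b, ?_, Subtype.ext rfl⟩
    rw [Finset.mem_filter]
    exact ⟨Finset.mem_univ _, le_M'_of_mem' b.2, Nat.even_iff.2 hbev, mem_AofF_iff.1 hbA⟩

end Stats

section Stats2

variable {k p : ℕ} {f : ↥(Tnk k (p+3)) → ↥(Tnk k (p+3))}

lemma odd_lt_of_mem {n a : ℕ} (h : a ∈ Tnk k n) (ho : a % 2 = 1) : a < 2*k := by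
  rw [mem_Tnk] at h; omega

lemma mem'_of_odd {a : ℕ} (h : a ∈ Tnk k (p+3)) (ho : a % 2 = 1) : a ∈ Tnk k (p+2) := by
  rw [mem_Tnk] at h ⊢; omega

@[simp] lemma topS_val : ((topS k p : ↥(Tnk k (p+3))) : ℕ) = 2*k+2*(p+2) := rfl
@[simp] lemma subtopS_val : ((subtopS k p : ↥(Tnk k (p+3))) : ℕ) = 2*k+2*(p+1) := rfl
@[simp] lemma topS'_val : ((topS' k p : ↥(Tnk k (p+2))) : ℕ) = 2*k+2*(p+1) := rfl

lemma proj_val_eq {a : ↥(Tnk k (p+2))} {c : ℕ} (hc : c ≠ 2*k+2*(p+2)) (hc' : c ≠ 2*k+2*(p+1)) :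
    ((f (incl k p a)) : ℕ) = c ↔ ((projf k p f a) : ℕ) = c := by
  by_cases hA : a ∈ AofF k p f
  · rw [mem_AofF_iff.1 hA, projf_of_mem hA, topS'_val]
    omega
  · rw [f_incl_val_of_not_mem hA]

lemma preimage_transfer (hf : f ∈ Staircases (Tnk k (p+3))) {b : ↥(Tnk k (p+3))} {c : ℕ}
    (hcM : c ≠ 2*k+2*(p+2)) (hcM' : c ≠ 2*k+2*(p+1)) (hb : (f b : ℕ) = c) :
    ∃ hbm : (b : ℕ) ∈ Tnk k (p+2), ((projf k p f ⟨(b : ℕ), hbm⟩ : ℕ) = c) := by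
  have hbM : (b : ℕ) ≠ 2*k+2*(p+2) := by
    intro h
    rw [f_top hf h] at hb
    exact hcM (by rw [← hb]; rfl)
  have hbm : (b : ℕ) ∈ Tnk k (p+2) := mem'_of_mem_ne b.2 hbM
  refine ⟨hbm, ?_⟩
  rw [← proj_val_eq hcM hcM', f_incl_mk (f := f)]
  exact hb

lemma projf_mem_Staircases (hf : f ∈ Staircases (Tnk k (p+3))) :
    projf k p f ∈ Staircases (Tnk k (p+2)) := by
  obtain ⟨hexc, hsur⟩ := mem_Staircases_iff.1 hf
  rw [mem_Staircases_iff]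
  constructor
  · intro a
    by_cases hA : a ∈ AofF k p f
    · rw [projf_of_mem hA]
      refine ⟨le_M'_of_mem' a.2, ?_⟩
      rw [topS'_val, Nat.even_iff]; omega
    · have hv : ((f (incl k p a)) : ℕ) = ((projf k p f a) : ℕ) := f_incl_val_of_not_mem hA
      constructor
      · rw [← hv]; exact (hexc (incl k p a)).1
      · rw [← hv]; exact (hexc (incl k p a)).2
  · intro b hbe
    have hbM : (b : ℕ) ≠ 2*k+2*(p+2) := fun h => M_not_mem' (h ▸ b.2)
    by_cases hbM' : (b : ℕ) = 2*k+2*(p+1)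
    · obtain ⟨a, ha⟩ := hsur (subtopS k p) (by rw [subtopS_val, Nat.even_iff]; omega)
      have hav : ((f a) : ℕ) = 2*k+2*(p+1) := by rw [ha]; rfl
      have haM : (a : ℕ) ≠ 2*k+2*(p+2) := by
        intro h
        rw [f_top hf h] at ha
        have h2 := Subtype.ext_iff.1 ha
        rw [topS_val, subtopS_val] at h2
        omega
      have ham : (a : ℕ) ∈ Tnk k (p+2) := mem'_of_mem_ne a.2 haM
      refine ⟨⟨(a : ℕ), ham⟩, ?_⟩
      by_cases hA : (⟨(a : ℕ), ham⟩ : ↥(Tnk k (p+2))) ∈ AofF k p f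
      · rw [projf_of_mem hA]
        exact Subtype.ext (by rw [topS'_val, hbM'])
      · apply Subtype.ext
        rw [← f_incl_val_of_not_mem hA, f_incl_mk (f := f), hav, hbM']
    · obtain ⟨a, ha⟩ := hsur ⟨(b : ℕ), mem_S_of_mem' b.2⟩ hbe
      have hav : ((f a) : ℕ) = (b : ℕ) := by rw [ha]
      obtain ⟨ham, hproj⟩ := preimage_transfer hf hbM hbM' hav
      exact ⟨⟨(a : ℕ), ham⟩, Subtype.ext hproj⟩

lemma siS_eq (hf : f ∈ Staircases (Tnk k (p+3))) :
    siS (Tnk k (p+3)) f = siS (Tnk k (p+2)) (projf k p f) := by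
  have h2kM : (2*k : ℕ) ≠ 2*k+2*(p+2) := by omega
  have h2kM' : (2*k : ℕ) ≠ 2*k+2*(p+1) := by omega
  rw [siS, siS]
  refine Finset.card_bij (fun (a : ↥(Tnk k (p+3))) ha =>
    (⟨(a : ℕ), mem'_of_odd a.2 (Nat.odd_iff.1 (Finset.mem_filter.1 ha).2.1.2.1)⟩ :
      ↥(Tnk k (p+2)))) ?_ ?_ ?_
  · intro a ha
    obtain ⟨-, ⟨hle, hodd, hnext⟩, hiso⟩ := Finset.mem_filter.1 ha
    have ha2k : (a : ℕ) < 2*k := odd_lt_of_mem a.2 (Nat.odd_iff.1 hodd)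
    rw [nextEven_Tnk k (p+3) _ (by omega) ha2k] at hnext
    have hfval : ((f (incl k p ⟨(a : ℕ), mem'_of_odd a.2 (Nat.odd_iff.1 hodd)⟩)) : ℕ) = 2*k := by
      rw [f_incl_mk (f := f)]; exact hnext
    have hga : ((projf k p f ⟨(a : ℕ), mem'_of_odd a.2 (Nat.odd_iff.1 hodd)⟩) : ℕ) = 2*k :=
      (proj_val_eq h2kM h2kM').1 hfval
    beta_reduce
    rw [Finset.mem_filter]
    refine ⟨Finset.mem_univ _, ⟨?_, hodd, ?_⟩, ?_⟩
    · rw [sndEvenMax_Tnk k p]; show (a : ℕ) ≤ 2*k+2*p; omega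
    · rw [nextEven_Tnk k (p+2) _ (by omega) ha2k]; exact hga
    · intro b' hb'
      have hgb : ((projf k p f b') : ℕ) = 2*k := by
        have h2 := Subtype.ext_iff.1 hb'
        rw [h2]; exact hga
      have hfb : ((f (incl k p b')) : ℕ) = 2*k := (proj_val_eq h2kM h2kM').2 hgb
      have heq : f (incl k p b') = f a := Subtype.ext (by rw [hfb, hnext])
      have h2 := Subtype.ext_iff.1 (hiso _ heq)
      exact Subtype.ext h2
  · intro a ha b hb h
    have h2 := Subtype.ext_iff.1 h
    exact Subtype.ext h2
  · intro b' hb'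
    obtain ⟨-, ⟨hle', hodd', hnext'⟩, hiso'⟩ := Finset.mem_filter.1 hb'
    have hb2k : (b' : ℕ) < 2*k := odd_lt_of_mem b'.2 (Nat.odd_iff.1 hodd')
    rw [nextEven_Tnk k (p+2) _ (by omega) hb2k] at hnext'
    have hfb : ((f (incl k p b')) : ℕ) = 2*k := (proj_val_eq h2kM h2kM').2 hnext'
    refine ⟨incl k p b', ?_, Subtype.ext rfl⟩
    rw [Finset.mem_filter]
    refine ⟨Finset.mem_univ _, ⟨?_, hodd', ?_⟩, ?_⟩
    · rw [sndEvenMax_Tnk k (p+1), incl_val]; omega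
    · rw [incl_val, nextEven_Tnk k (p+3) _ (by omega) hb2k]; exact hfb
    · intro b hb
      have hbv : ((f b) : ℕ) = 2*k := by
        have h2 := Subtype.ext_iff.1 hb
        rw [h2]; exact hfb
      obtain ⟨hbm, hproj⟩ := preimage_transfer hf h2kM h2kM' hbv
      have heq : projf k p f ⟨(b : ℕ), hbm⟩ = projf k p f b' :=
        Subtype.ext (by rw [hproj, hnext'])
      have h2 := Subtype.ext_iff.1 (hiso' _ heq)
      exact Subtype.ext h2

lemma sdS_eq (hf : f ∈ Staircases (Tnk k (p+3))) :
    sdS (Tnk k (p+3)) f = sdS (Tnk k (p+2)) (projf k p f) := by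
  have h2kM : (2*k : ℕ) ≠ 2*k+2*(p+2) := by omega
  have h2kM' : (2*k : ℕ) ≠ 2*k+2*(p+1) := by omega
  rw [sdS, sdS]
  refine Finset.card_bij (fun (a : ↥(Tnk k (p+3))) ha =>
    (⟨(a : ℕ), mem'_of_odd a.2 (Nat.odd_iff.1 (Finset.mem_filter.1 ha).2.1.2.1)⟩ :
      ↥(Tnk k (p+2)))) ?_ ?_ ?_
  · intro a ha
    obtain ⟨-, ⟨hle, hodd, hnext⟩, b, hbne, hbeq⟩ := Finset.mem_filter.1 ha
    have ha2k : (a : ℕ) < 2*k := odd_lt_of_mem a.2 (Nat.odd_iff.1 hodd)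
    rw [nextEven_Tnk k (p+3) _ (by omega) ha2k] at hnext
    have hfval : ((f (incl k p ⟨(a : ℕ), mem'_of_odd a.2 (Nat.odd_iff.1 hodd)⟩)) : ℕ) = 2*k := by
      rw [f_incl_mk (f := f)]; exact hnext
    have hga : ((projf k p f ⟨(a : ℕ), mem'_of_odd a.2 (Nat.odd_iff.1 hodd)⟩) : ℕ) = 2*k :=
      (proj_val_eq h2kM h2kM').1 hfval
    have hbv : ((f b) : ℕ) = 2*k := by
      have h2 := Subtype.ext_iff.1 hbeq
      rw [h2]; exact hnext
    obtain ⟨hbm, hproj⟩ := preimage_transfer hf h2kM h2kM' hbv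
    beta_reduce
    rw [Finset.mem_filter]
    refine ⟨Finset.mem_univ _, ⟨?_, hodd, ?_⟩, ⟨(b : ℕ), hbm⟩, ?_, ?_⟩
    · rw [sndEvenMax_Tnk k p]; show (a : ℕ) ≤ 2*k+2*p; omega
    · rw [nextEven_Tnk k (p+2) _ (by omega) ha2k]; exact hga
    · intro h
      have h2 := Subtype.ext_iff.1 h
      exact hbne (Subtype.ext h2)
    · exact Subtype.ext (by rw [hproj, hga])
  · intro a ha b hb h
    have h2 := Subtype.ext_iff.1 h
    exact Subtype.ext h2
  · intro b' hb'
    obtain ⟨-, ⟨hle', hodd', hnext'⟩, c', hcne, hceq⟩ := Finset.mem_filter.1 hb'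
    have hb2k : (b' : ℕ) < 2*k := odd_lt_of_mem b'.2 (Nat.odd_iff.1 hodd')
    rw [nextEven_Tnk k (p+2) _ (by omega) hb2k] at hnext'
    have hfb : ((f (incl k p b')) : ℕ) = 2*k := (proj_val_eq h2kM h2kM').2 hnext'
    have hgc : ((projf k p f c') : ℕ) = 2*k := by
      have h2 := Subtype.ext_iff.1 hceq
      rw [h2]; exact hnext'
    have hfc : ((f (incl k p c')) : ℕ) = 2*k := (proj_val_eq h2kM h2kM').2 hgc
    refine ⟨incl k p b', ?_, Subtype.ext rfl⟩
    rw [Finset.mem_filter]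
    refine ⟨Finset.mem_univ _, ⟨?_, hodd', ?_⟩, incl k p c', ?_, ?_⟩
    · rw [sndEvenMax_Tnk k (p+1), incl_val]; omega
    · rw [incl_val, nextEven_Tnk k (p+3) _ (by omega) hb2k]; exact hfb
    · intro h
      have h2 := Subtype.ext_iff.1 h
      exact hcne (Subtype.ext h2)
    · exact Subtype.ext (by rw [hfc, hfb])
end Stats2

section Stats3

variable {k p : ℕ} {f : ↥(Tnk k (p+3)) → ↥(Tnk k (p+3))}

lemma incl_top' : incl k p (topS' k p) = subtopS k p := Subtype.ext rfl

lemma even_M' : Even (2*k+2*(p+1)) := by rw [Nat.even_iff]; omega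

/-- If `A = Q` then `M'` is an isolated fixed point of `f`; characterization. -/
lemma subtop_fix_iso_iff (hf : f ∈ Staircases (Tnk k (p+3))) :
    (subtopS k p ∈ Finset.univ.filter (fun a : ↥(Tnk k (p+3)) =>
        IsFixedPtS (Tnk k (p+3)) f a ∧ ∀ b : ↥(Tnk k (p+3)), f b = a → b = a)) ↔
      AofF k p f = (PofG k p (projf k p f)).erase (topS' k p) := by
  rw [Finset.mem_filter]
  constructor
  · rintro ⟨-, ⟨-, -, hfix⟩, hiso⟩
    have htA : topS' k p ∉ AofF k p f := by
      intro h
      have h2 := mem_AofF_iff.1 h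
      rw [incl_top', hfix, subtopS_val] at h2
      omega
    apply Finset.Subset.antisymm
    · intro a' ha'
      rw [Finset.mem_erase]
      refine ⟨fun h => htA (h ▸ ha'), AofF_subset_PofG ha'⟩
    · intro b' hb'
      obtain ⟨hne, hbP⟩ := Finset.mem_erase.1 hb'
      by_contra hbA
      have hfb := projf_of_not_mem hbA
      have hv : ((f (incl k p b')) : ℕ) = 2*k+2*(p+1) := by
        rw [hfb, incl_val, mem_PofG_iff.1 hbP]
      have heq : f (incl k p b') = subtopS k p := Subtype.ext (by rw [hv, subtopS_val])
      have h4 := Subtype.ext_iff.1 (hiso _ heq)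
      rw [incl_val, subtopS_val] at h4
      exact hne (Subtype.ext (by rw [topS'_val, h4]))
  · intro hAQ
    have htA : topS' k p ∉ AofF k p f := by rw [hAQ]; exact Finset.notMem_erase _ _
    have hgfix : projf k p f (topS' k p) = topS' k p :=
      staircase_top' (projf_mem_Staircases hf)
    have hfix : f (subtopS k p) = subtopS k p := by
      have h5 := projf_of_not_mem htA
      rw [hgfix, incl_top'] at h5
      exact h5
    refine ⟨Finset.mem_univ _, ⟨?_, ?_, hfix⟩, ?_⟩
    · rw [sndEvenMax_Tnk k (p+1), subtopS_val]
    · exact even_M'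
    · intro b hb
      have hbv : ((f b) : ℕ) = 2*k+2*(p+1) := by rw [hb]; rfl
      have hbM : (b : ℕ) ≠ 2*k+2*(p+2) := by
        intro h
        rw [f_top hf h] at hb
        have h2 := Subtype.ext_iff.1 hb
        rw [topS_val, subtopS_val] at h2
        omega
      have hbm : (b : ℕ) ∈ Tnk k (p+2) := mem'_of_mem_ne b.2 hbM
      by_cases hbA : (⟨(b : ℕ), hbm⟩ : ↥(Tnk k (p+2))) ∈ AofF k p f
      · exfalso
        have h2 := mem_AofF_iff.1 hbA
        rw [f_incl_mk (f := f), hbv] at h2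
        omega
      · have h5 := projf_of_not_mem hbA
        have h6 : ((projf k p f ⟨(b : ℕ), hbm⟩) : ℕ) = 2*k+2*(p+1) := by
          rw [← f_incl_val_of_not_mem hbA, f_incl_mk (f := f), hbv]
        have h7 : (⟨(b : ℕ), hbm⟩ : ↥(Tnk k (p+2))) ∈ PofG k p (projf k p f) :=
          mem_PofG_iff.2 h6
        have h8 : (⟨(b : ℕ), hbm⟩ : ↥(Tnk k (p+2))) ∉
            (PofG k p (projf k p f)).erase (topS' k p) := fun h => hbA (hAQ ▸ h)
        rw [Finset.mem_erase] at h8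
        push_neg at h8
        have h10 : (⟨(b : ℕ), hbm⟩ : ↥(Tnk k (p+2))) = topS' k p := by
          by_contra hne
          exact h8 hne h7
        have h9 := Subtype.ext_iff.1 h10
        rw [topS'_val] at h9
        exact Subtype.ext (by rw [subtopS_val, ← h9])

/-- `M'` is a doubled fixed point of `f` iff `M' ∉ A` and `A ≠ Q`. -/
lemma subtop_fix_dbl_iff (hf : f ∈ Staircases (Tnk k (p+3))) :
    (subtopS k p ∈ Finset.univ.filter (fun a : ↥(Tnk k (p+3)) =>
        IsFixedPtS (Tnk k (p+3)) f a ∧ ∃ b : ↥(Tnk k (p+3)), b ≠ a ∧ f b = a)) ↔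
      (topS' k p ∉ AofF k p f ∧
        AofF k p f ≠ (PofG k p (projf k p f)).erase (topS' k p)) := by
  rw [Finset.mem_filter]
  constructor
  · rintro ⟨-, ⟨-, -, hfix⟩, b, hbne, hbeq⟩
    have htA : topS' k p ∉ AofF k p f := by
      intro h
      have h2 := mem_AofF_iff.1 h
      rw [incl_top', hfix, subtopS_val] at h2
      omega
    refine ⟨htA, ?_⟩
    -- the extra preimage b gives an element of Q \ A
    have hbv : ((f b) : ℕ) = 2*k+2*(p+1) := by rw [hbeq]; rfl
    have hbM : (b : ℕ) ≠ 2*k+2*(p+2) := by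
      intro h
      rw [f_top hf h] at hbeq
      have h2 := Subtype.ext_iff.1 hbeq
      rw [topS_val, subtopS_val] at h2
      omega
    have hbm : (b : ℕ) ∈ Tnk k (p+2) := mem'_of_mem_ne b.2 hbM
    have hbM' : (b : ℕ) ≠ 2*k+2*(p+1) := by
      intro h
      exact hbne (Subtype.ext (by rw [h, subtopS_val]))
    by_cases hbA : (⟨(b : ℕ), hbm⟩ : ↥(Tnk k (p+2))) ∈ AofF k p f
    · exfalso
      have h2 := mem_AofF_iff.1 hbA
      rw [f_incl_mk (f := f), hbv] at h2
      omega
    · intro hAQ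
      have h6 : ((projf k p f ⟨(b : ℕ), hbm⟩) : ℕ) = 2*k+2*(p+1) := by
        rw [← f_incl_val_of_not_mem hbA, f_incl_mk (f := f), hbv]
      apply hbA
      rw [hAQ, Finset.mem_erase]
      exact ⟨fun h => hbM' (by rw [← topS'_val (k := k) (p := p), ← h]),
        mem_PofG_iff.2 h6⟩
  · rintro ⟨htA, hAQ⟩
    have hgfix : projf k p f (topS' k p) = topS' k p :=
      staircase_top' (projf_mem_Staircases hf)
    have hfix : f (subtopS k p) = subtopS k p := by
      have h5 := projf_of_not_mem htA
      rw [hgfix, incl_top'] at h5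
      exact h5
    have hsub : AofF k p f ⊆ (PofG k p (projf k p f)).erase (topS' k p) := fun a' ha' =>
      Finset.mem_erase.2 ⟨fun h => htA (h ▸ ha'), AofF_subset_PofG ha'⟩
    obtain ⟨b', hbQ, hbA⟩ := Finset.exists_of_ssubset (lt_of_le_of_ne hsub hAQ)
    obtain ⟨hbne, hbP⟩ := Finset.mem_erase.1 hbQ
    have hfb := projf_of_not_mem hbA
    have hv : ((f (incl k p b')) : ℕ) = 2*k+2*(p+1) := by
      rw [hfb, incl_val, mem_PofG_iff.1 hbP]
    refine ⟨Finset.mem_univ _, ⟨?_, ?_, hfix⟩, incl k p b', ?_, ?_⟩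
    · rw [sndEvenMax_Tnk k (p+1), subtopS_val]
    · exact even_M'
    · intro h
      have h2 := Subtype.ext_iff.1 h
      rw [incl_val, subtopS_val] at h2
      exact hbne (Subtype.ext (by rw [topS'_val, h2]))
    · exact Subtype.ext (by rw [hv, subtopS_val])

end Stats3

section Stats4

variable {k p : ℕ} {f : ↥(Tnk k (p+3)) → ↥(Tnk k (p+3))}

lemma fix_transfer (hf : f ∈ Staircases (Tnk k (p+3))) {a : ↥(Tnk k (p+3))}
    (hle : (a : ℕ) ≤ 2*k+2*p) (hm : (a : ℕ) ∈ Tnk k (p+2)) :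
    (f a = a ↔ projf k p f ⟨(a : ℕ), hm⟩ = (⟨(a : ℕ), hm⟩ : ↥(Tnk k (p+2)))) := by
  have hcM : (a : ℕ) ≠ 2*k+2*(p+2) := by omega
  have hcM' : (a : ℕ) ≠ 2*k+2*(p+1) := by omega
  constructor
  · intro hfix
    apply Subtype.ext
    exact (proj_val_eq hcM hcM').1 (by rw [f_incl_mk (f := f), hfix])
  · intro hfix
    apply Subtype.ext
    have h2 : ((projf k p f ⟨(a : ℕ), hm⟩) : ℕ) = (a : ℕ) := Subtype.ext_iff.1 hfix
    rw [← f_incl_mk (f := f) hm]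
    exact (proj_val_eq hcM hcM').2 h2

/-- Transfer of isolated fixed points below `M'`. -/
lemma card_fix_iso_erase (hf : f ∈ Staircases (Tnk k (p+3))) :
    (((Finset.univ.filter (fun a : ↥(Tnk k (p+3)) =>
        IsFixedPtS (Tnk k (p+3)) f a ∧ ∀ b : ↥(Tnk k (p+3)), f b = a → b = a)).erase
        (subtopS k p)).card) = fiS (Tnk k (p+2)) (projf k p f) := by
  rw [show fiS (Tnk k (p+2)) (projf k p f) = (Finset.univ.filter
      (fun a : ↥(Tnk k (p+2)) => IsFixedPtS (Tnk k (p+2)) (projf k p f) a ∧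
        ∀ b : ↥(Tnk k (p+2)), projf k p f b = a → b = a)).card from rfl]
  refine Finset.card_bij (fun (a : ↥(Tnk k (p+3))) ha =>
    (⟨(a : ℕ), mem'_of_mem_le a.2 (by
      have h := (Finset.mem_filter.1 (Finset.mem_erase.1 ha).2).2.1.1
      rw [sndEvenMax_Tnk k (p+1)] at h
      exact h)⟩ : ↥(Tnk k (p+2)))) ?_ ?_ ?_
  · intro a ha
    obtain ⟨hane, hmem⟩ := Finset.mem_erase.1 ha
    obtain ⟨-, ⟨hle, hev, hfix⟩, hiso⟩ := Finset.mem_filter.1 hmem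
    rw [sndEvenMax_Tnk k (p+1)] at hle
    have haM' : (a : ℕ) ≠ 2*k+2*(p+1) := by
      intro h
      exact hane (Subtype.ext (by rw [h, subtopS_val]))
    have hm : (a : ℕ) ∈ Tnk k (p+2) := mem'_of_mem_le a.2 hle
    have hle'' : (a : ℕ) ≤ 2*k+2*p := le_M''_of_even_ne hm (Nat.even_iff.1 hev) haM'
    beta_reduce
    rw [Finset.mem_filter]
    refine ⟨Finset.mem_univ _, ⟨?_, hev, (fix_transfer hf hle'' hm).1 hfix⟩, ?_⟩
    · rw [sndEvenMax_Tnk k p]; show (a : ℕ) ≤ 2*k+2*p; exact hle''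
    · intro b' hb'
      have hgb := Subtype.ext_iff.1 hb'
      have hgb2 : ((projf k p f b') : ℕ) = (a : ℕ) := hgb
      have hfb : ((f (incl k p b')) : ℕ) = (a : ℕ) :=
        (proj_val_eq (by omega) haM').2 hgb2
      have heq : f (incl k p b') = a := Subtype.ext (by rw [hfb])
      have h2 := Subtype.ext_iff.1 (hiso _ heq)
      exact Subtype.ext h2
  · intro a ha b hb h
    have h2 := Subtype.ext_iff.1 h
    exact Subtype.ext h2
  · intro b' hb'
    obtain ⟨-, ⟨hle', hev', hfix'⟩, hiso'⟩ := Finset.mem_filter.1 hb'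
    rw [sndEvenMax_Tnk k p] at hle'
    have hcM : (b' : ℕ) ≠ 2*k+2*(p+2) := by omega
    have hcM' : (b' : ℕ) ≠ 2*k+2*(p+1) := by omega
    have hfix : f (incl k p b') = incl k p b' := by
      have h := (fix_transfer (a := incl k p b') hf (by rw [incl_val]; omega) b'.2).2
      apply h
      have : (⟨((incl k p b' : ↥(Tnk k (p+3))) : ℕ), b'.2⟩ : ↥(Tnk k (p+2))) = b' :=
        Subtype.ext rfl
      rw [this]
      exact hfix'
    refine ⟨incl k p b', ?_, Subtype.ext rfl⟩
    rw [Finset.mem_erase]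
    refine ⟨?_, ?_⟩
    · intro h
      have h2 := Subtype.ext_iff.1 h
      rw [incl_val, subtopS_val] at h2
      omega
    rw [Finset.mem_filter]
    refine ⟨Finset.mem_univ _, ⟨?_, hev', hfix⟩, ?_⟩
    · rw [sndEvenMax_Tnk k (p+1), incl_val]; omega
    · intro b hb
      have hbv : ((f b) : ℕ) = (b' : ℕ) := by
        have h2 := Subtype.ext_iff.1 hb
        rw [incl_val] at h2
        exact h2
      obtain ⟨hbm, hproj⟩ := preimage_transfer hf hcM hcM' hbv
      have heq : projf k p f ⟨(b : ℕ), hbm⟩ = b' := Subtype.ext hproj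
      have h2 := Subtype.ext_iff.1 (hiso' _ heq)
      exact Subtype.ext h2

/-- Transfer of doubled fixed points below `M'`. -/
lemma card_fix_dbl_erase (hf : f ∈ Staircases (Tnk k (p+3))) :
    (((Finset.univ.filter (fun a : ↥(Tnk k (p+3)) =>
        IsFixedPtS (Tnk k (p+3)) f a ∧ ∃ b : ↥(Tnk k (p+3)), b ≠ a ∧ f b = a)).erase
        (subtopS k p)).card) = fdS (Tnk k (p+2)) (projf k p f) := by
  rw [show fdS (Tnk k (p+2)) (projf k p f) = (Finset.univ.filter
      (fun a : ↥(Tnk k (p+2)) => IsFixedPtS (Tnk k (p+2)) (projf k p f) a ∧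
        ∃ b : ↥(Tnk k (p+2)), b ≠ a ∧ projf k p f b = a)).card from rfl]
  refine Finset.card_bij (fun (a : ↥(Tnk k (p+3))) ha =>
    (⟨(a : ℕ), mem'_of_mem_le a.2 (by
      have h := (Finset.mem_filter.1 (Finset.mem_erase.1 ha).2).2.1.1
      rw [sndEvenMax_Tnk k (p+1)] at h
      exact h)⟩ : ↥(Tnk k (p+2)))) ?_ ?_ ?_
  · intro a ha
    obtain ⟨hane, hmem⟩ := Finset.mem_erase.1 ha
    obtain ⟨-, ⟨hle, hev, hfix⟩, b, hbne, hbeq⟩ := Finset.mem_filter.1 hmem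
    rw [sndEvenMax_Tnk k (p+1)] at hle
    have haM' : (a : ℕ) ≠ 2*k+2*(p+1) := by
      intro h
      exact hane (Subtype.ext (by rw [h, subtopS_val]))
    have hm : (a : ℕ) ∈ Tnk k (p+2) := mem'_of_mem_le a.2 hle
    have hle'' : (a : ℕ) ≤ 2*k+2*p := le_M''_of_even_ne hm (Nat.even_iff.1 hev) haM'
    have hbv : ((f b) : ℕ) = (a : ℕ) := by rw [hbeq]
    obtain ⟨hbm, hproj⟩ := preimage_transfer hf (by omega) haM' hbv
    beta_reduce
    rw [Finset.mem_filter]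
    refine ⟨Finset.mem_univ _, ⟨?_, hev, (fix_transfer hf hle'' hm).1 hfix⟩,
      ⟨(b : ℕ), hbm⟩, ?_, ?_⟩
    · rw [sndEvenMax_Tnk k p]; show (a : ℕ) ≤ 2*k+2*p; exact hle''
    · intro h
      have h2 := Subtype.ext_iff.1 h
      exact hbne (Subtype.ext h2)
    · exact Subtype.ext hproj
  · intro a ha b hb h
    have h2 := Subtype.ext_iff.1 h
    exact Subtype.ext h2
  · intro b' hb'
    obtain ⟨-, ⟨hle', hev', hfix'⟩, c', hcne, hceq⟩ := Finset.mem_filter.1 hb'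
    rw [sndEvenMax_Tnk k p] at hle'
    have hcM : (b' : ℕ) ≠ 2*k+2*(p+2) := by omega
    have hcM' : (b' : ℕ) ≠ 2*k+2*(p+1) := by omega
    have hfix : f (incl k p b') = incl k p b' := by
      have h := (fix_transfer (a := incl k p b') hf (by rw [incl_val]; omega) b'.2).2
      apply h
      have : (⟨((incl k p b' : ↥(Tnk k (p+3))) : ℕ), b'.2⟩ : ↥(Tnk k (p+2))) = b' :=
        Subtype.ext rfl
      rw [this]
      exact hfix'
    have hgc : ((projf k p f c') : ℕ) = (b' : ℕ) := Subtype.ext_iff.1 hceq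
    have hfc : ((f (incl k p c')) : ℕ) = (b' : ℕ) := (proj_val_eq hcM hcM').2 hgc
    refine ⟨incl k p b', ?_, Subtype.ext rfl⟩
    rw [Finset.mem_erase]
    refine ⟨?_, ?_⟩
    · intro h
      have h2 := Subtype.ext_iff.1 h
      rw [incl_val, subtopS_val] at h2
      omega
    rw [Finset.mem_filter]
    refine ⟨Finset.mem_univ _, ⟨?_, hev', hfix⟩, incl k p c', ?_, ?_⟩
    · rw [sndEvenMax_Tnk k (p+1), incl_val]; omega
    · intro h
      have h2 := Subtype.ext_iff.1 h
      exact hcne (Subtype.ext h2)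
    · exact Subtype.ext (by rw [hfc, incl_val])

lemma fiS_eq (hf : f ∈ Staircases (Tnk k (p+3))) :
    fiS (Tnk k (p+3)) f = fiS (Tnk k (p+2)) (projf k p f) +
      (if AofF k p f = (PofG k p (projf k p f)).erase (topS' k p) then 1 else 0) := by
  rw [show fiS (Tnk k (p+3)) f = (Finset.univ.filter
      (fun a : ↥(Tnk k (p+3)) => IsFixedPtS (Tnk k (p+3)) f a ∧
        ∀ b : ↥(Tnk k (p+3)), f b = a → b = a)).card from rfl]
  by_cases hAQ : AofF k p f = (PofG k p (projf k p f)).erase (topS' k p)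
  · rw [if_pos hAQ, ← card_fix_iso_erase hf]
    have hm := (subtop_fix_iso_iff hf).2 hAQ
    rw [Finset.card_erase_of_mem hm]
    have hpos : 0 < (Finset.univ.filter
      (fun a : ↥(Tnk k (p+3)) => IsFixedPtS (Tnk k (p+3)) f a ∧
        ∀ b : ↥(Tnk k (p+3)), f b = a → b = a)).card := Finset.card_pos.2 ⟨_, hm⟩
    omega
  · rw [if_neg hAQ, add_zero, ← card_fix_iso_erase hf,
      Finset.erase_eq_of_notMem (fun h => hAQ ((subtop_fix_iso_iff hf).1 h))]

lemma fdS_eq (hf : f ∈ Staircases (Tnk k (p+3))) :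
    fdS (Tnk k (p+3)) f = fdS (Tnk k (p+2)) (projf k p f) +
      (if topS' k p ∉ AofF k p f ∧
          AofF k p f ≠ (PofG k p (projf k p f)).erase (topS' k p) then 1 else 0) := by
  rw [show fdS (Tnk k (p+3)) f = (Finset.univ.filter
      (fun a : ↥(Tnk k (p+3)) => IsFixedPtS (Tnk k (p+3)) f a ∧
        ∃ b : ↥(Tnk k (p+3)), b ≠ a ∧ f b = a)).card from rfl]
  by_cases hc : topS' k p ∉ AofF k p f ∧
      AofF k p f ≠ (PofG k p (projf k p f)).erase (topS' k p)
  · rw [if_pos hc, ← card_fix_dbl_erase hf]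
    have hm := (subtop_fix_dbl_iff hf).2 hc
    rw [Finset.card_erase_of_mem hm]
    have hpos : 0 < (Finset.univ.filter
      (fun a : ↥(Tnk k (p+3)) => IsFixedPtS (Tnk k (p+3)) f a ∧
        ∃ b : ↥(Tnk k (p+3)), b ≠ a ∧ f b = a)).card := Finset.card_pos.2 ⟨_, hm⟩
    omega
  · rw [if_neg hc, add_zero, ← card_fix_dbl_erase hf,
      Finset.erase_eq_of_notMem (fun h => hc ((subtop_fix_dbl_iff hf).1 h))]

end Stats4

section Ext

variable {k p : ℕ} {g : ↥(Tnk k (p+2)) → ↥(Tnk k (p+2))} {A : Finset ↥(Tnk k (p+2))}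
  {f : ↥(Tnk k (p+3)) → ↥(Tnk k (p+3))}

lemma extf_incl (a : ↥(Tnk k (p+2))) :
    extf k p g A (incl k p a) = if a ∈ A then topS k p else incl k p (g a) := dif_pos a.2

lemma extf_of_not_mem {b : ↥(Tnk k (p+3))} (hb : (b : ℕ) ∉ Tnk k (p+2)) :
    extf k p g A b = topS k p := dif_neg hb

lemma AofF_extf : AofF k p (extf k p g A) = A := by
  ext a
  rw [mem_AofF_iff, extf_incl]
  by_cases h : a ∈ A
  · rw [if_pos h]
    exact iff_of_true rfl h
  · rw [if_neg h]
    refine iff_of_false ?_ h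
    intro hc
    have := lt_M_of_mem' (g a).2
    rw [incl_val] at hc
    omega

lemma projf_extf (hA : A ⊆ PofG k p g) : projf k p (extf k p g A) = g := by
  funext a
  by_cases h : a ∈ A
  · have hA2 : a ∈ AofF k p (extf k p g A) := by rw [AofF_extf]; exact h
    rw [projf_of_mem hA2]
    exact (Subtype.ext (mem_PofG_iff.1 (hA h))).symm
  · have hnA : a ∉ AofF k p (extf k p g A) := by rw [AofF_extf]; exact h
    have h5 := projf_of_not_mem hnA
    rw [extf_incl, if_neg h] at h5
    exact (incl_inj h5).symm

lemma extf_projf (hf : f ∈ Staircases (Tnk k (p+3))) :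
    extf k p (projf k p f) (AofF k p f) = f := by
  funext b
  by_cases hb : (b : ℕ) ∈ Tnk k (p+2)
  · have hbe : incl k p ⟨(b : ℕ), hb⟩ = b := Subtype.ext rfl
    rw [← hbe, extf_incl]
    by_cases hA : (⟨(b : ℕ), hb⟩ : ↥(Tnk k (p+2))) ∈ AofF k p f
    · rw [if_pos hA]
      exact (Subtype.ext (mem_AofF_iff.1 hA)).symm
    · rw [if_neg hA]
      exact (projf_of_not_mem hA).symm
  · have hbM : (b : ℕ) = 2*k+2*(p+2) := eq_M_of_not_mem' b.2 hb
    rw [extf_of_not_mem hb, f_top hf hbM]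

lemma extf_mem_Staircases (hg : g ∈ Staircases (Tnk k (p+2)))
    (hA : A ∈ ((PofG k p g).powerset.erase (PofG k p g))) :
    extf k p g A ∈ Staircases (Tnk k (p+3)) := by
  obtain ⟨hAne, hApow⟩ := Finset.mem_erase.1 hA
  have hAP := Finset.mem_powerset.1 hApow
  obtain ⟨hexc, hsur⟩ := mem_Staircases_iff.1 hg
  rw [mem_Staircases_iff]
  constructor
  · intro b
    by_cases hb : (b : ℕ) ∈ Tnk k (p+2)
    · have hbe : incl k p ⟨(b : ℕ), hb⟩ = b := Subtype.ext rfl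
      rw [← hbe, extf_incl]
      by_cases h : (⟨(b : ℕ), hb⟩ : ↥(Tnk k (p+2))) ∈ A
      · rw [if_pos h]
        constructor
        · rw [incl_val, topS_val]
          exact le_of_lt (lt_M_of_mem' hb)
        · rw [topS_val, Nat.even_iff]; omega
      · rw [if_neg h]
        refine ⟨?_, ?_⟩
        · rw [incl_val, incl_val]
          exact (hexc ⟨(b : ℕ), hb⟩).1
        · rw [incl_val]
          exact (hexc ⟨(b : ℕ), hb⟩).2
    · rw [extf_of_not_mem hb]
      constructor
      · rw [topS_val]; exact le_M_of_mem b.2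
      · rw [topS_val, Nat.even_iff]; omega
  · intro b hbe
    by_cases hbM : (b : ℕ) = 2*k+2*(p+2)
    · refine ⟨topS k p, ?_⟩
      rw [extf_of_not_mem M_not_mem']
      exact Subtype.ext (by rw [topS_val, hbM])
    · have hbm : (b : ℕ) ∈ Tnk k (p+2) := mem'_of_mem_ne b.2 hbM
      by_cases hbM' : (b : ℕ) = 2*k+2*(p+1)
      · have hss : A ⊂ PofG k p g := lt_of_le_of_ne hAP hAne
        obtain ⟨c, hcP, hcA⟩ := Finset.exists_of_ssubset hss
        refine ⟨incl k p c, ?_⟩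
        rw [extf_incl, if_neg hcA]
        apply Subtype.ext
        rw [incl_val, mem_PofG_iff.1 hcP, hbM']
      · obtain ⟨a, ha⟩ := hsur ⟨(b : ℕ), hbm⟩ hbe
        have haA : a ∉ A := by
          intro h
          have h2 := mem_PofG_iff.1 (hAP h)
          rw [ha] at h2
          exact hbM' h2
        refine ⟨incl k p a, ?_⟩
        rw [extf_incl, if_neg haA, ha]
        exact Subtype.ext rfl

lemma AofF_mem (hf : f ∈ Staircases (Tnk k (p+3))) :
    AofF k p f ∈ ((PofG k p (projf k p f)).powerset.erase (PofG k p (projf k p f))) := by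
  rw [Finset.mem_erase]
  constructor
  · obtain ⟨b, hb⟩ := (mem_Staircases_iff.1 hf).2 (subtopS k p) even_M'
    have hbv : ((f b) : ℕ) = 2*k+2*(p+1) := by rw [hb]; rfl
    have hbM : (b : ℕ) ≠ 2*k+2*(p+2) := by
      intro h
      rw [f_top hf h] at hb
      have h2 := Subtype.ext_iff.1 hb
      rw [topS_val, subtopS_val] at h2
      omega
    have hbm : (b : ℕ) ∈ Tnk k (p+2) := mem'_of_mem_ne b.2 hbM
    have hbA : (⟨(b : ℕ), hbm⟩ : ↥(Tnk k (p+2))) ∉ AofF k p f := by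
      intro h
      have h2 := mem_AofF_iff.1 h
      rw [f_incl_mk (f := f), hbv] at h2
      omega
    have hbP : (⟨(b : ℕ), hbm⟩ : ↥(Tnk k (p+2))) ∈ PofG k p (projf k p f) := by
      apply mem_PofG_iff.2
      rw [← f_incl_val_of_not_mem hbA, f_incl_mk (f := f), hbv]
    intro hEq
    rw [hEq] at hbA
    exact hbA hbP
  · exact Finset.mem_powerset.2 AofF_subset_PofG

lemma top'_mem_PofG (hg : g ∈ Staircases (Tnk k (p+2))) : topS' k p ∈ PofG k p g :=
  mem_PofG_iff.2 (by rw [staircase_top' hg]; rfl)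

lemma moS'_eq (hg : g ∈ Staircases (Tnk k (p+2))) :
    moS (Tnk k (p+2)) g =
      ((((PofG k p g).erase (topS' k p)).filter fun a : ↥(Tnk k (p+2)) =>
        (a : ℕ) % 2 = 1).card) := by
  rw [moS]
  congr 1
  ext a
  rw [Finset.mem_filter, Finset.mem_filter, Finset.mem_erase, mem_PofG_iff,
    sndEvenMax_Tnk k p, sup_Tnk k (p+1)]
  constructor
  · rintro ⟨-, hle, hodd, hsup⟩
    have ho := Nat.odd_iff.1 hodd
    refine ⟨⟨?_, hsup⟩, ho⟩
    intro h
    have h2 := Subtype.ext_iff.1 h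
    rw [topS'_val] at h2
    omega
  · rintro ⟨⟨hne, hsup⟩, ho⟩
    have hlt : (a : ℕ) < 2*k := odd_lt_of_mem a.2 ho
    exact ⟨Finset.mem_univ _, by omega, Nat.odd_iff.2 ho, hsup⟩

lemma meS'_eq (hg : g ∈ Staircases (Tnk k (p+2))) :
    meS (Tnk k (p+2)) g =
      ((((PofG k p g).erase (topS' k p)).filter fun a : ↥(Tnk k (p+2)) =>
        (a : ℕ) % 2 = 0).card) := by
  rw [meS]
  congr 1
  ext a
  rw [Finset.mem_filter, Finset.mem_filter, Finset.mem_erase, mem_PofG_iff,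
    sndEvenMax_Tnk k p, sup_Tnk k (p+1)]
  constructor
  · rintro ⟨-, hle, hev, hsup⟩
    have he := Nat.even_iff.1 hev
    refine ⟨⟨?_, hsup⟩, he⟩
    intro h
    have h2 := Subtype.ext_iff.1 h
    rw [topS'_val] at h2
    omega
  · rintro ⟨⟨hne, hsup⟩, he⟩
    have hne' : (a : ℕ) ≠ 2*k+2*(p+1) := by
      intro h
      exact hne (Subtype.ext (by rw [h, topS'_val]))
    have := le_M''_of_even_ne a.2 he hne'
    exact ⟨Finset.mem_univ _, by omega, Nat.even_iff.2 he, hsup⟩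

end Ext

section Assemble

lemma prod_indicator_split {α : Type} {R : Type} [CommRing R] (x xb : R)
    (pr : α → Prop) [DecidablePred pr] (A : Finset α) :
    (∏ a ∈ A, (if pr a then x else xb)) =
      x ^ ((A.filter pr).card) * xb ^ ((A.filter fun a => ¬ pr a).card) := by
  rw [← Finset.prod_filter_mul_prod_filter_not A pr]
  congr 1
  · rw [Finset.prod_congr rfl (fun a ha => if_pos (Finset.mem_filter.1 ha).2),
      Finset.prod_const]
  · rw [Finset.prod_congr rfl (fun a ha => if_neg (Finset.mem_filter.1 ha).2),
      Finset.prod_const]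

lemma sum_powerset_split {α : Type} {R : Type} [CommRing R] (x xb : R)
    (pr : α → Prop) [DecidablePred pr] (Q : Finset α) :
    ∑ A ∈ Q.powerset,
        x ^ ((A.filter pr).card) * xb ^ ((A.filter fun a => ¬ pr a).card)
      = (x+1) ^ ((Q.filter pr).card) * (xb+1) ^ ((Q.filter fun a => ¬ pr a).card) := by
  have h2 : ∀ a ∈ Q, ((if pr a then x else xb) + 1) = (if pr a then x + 1 else xb + 1) := by
    intro a ha
    split_ifs <;> ring
  rw [← prod_indicator_split (x+1) (xb+1) pr Q, ← Finset.prod_congr rfl h2, Finset.prod_add]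
  apply Finset.sum_congr rfl
  intro A hA
  rw [Finset.prod_const_one, mul_one, prod_indicator_split]

/-- The weight of the extension determined by `A`. -/
def Wt (R : Type) [CommRing R] (k p : ℕ) (g : ↥(Tnk k (p+2)) → ↥(Tnk k (p+2)))
    (x y z xb yb zb : R) (A : Finset ↥(Tnk k (p+2))) : R :=
  x ^ ((A.filter fun a : ↥(Tnk k (p+2)) => (a : ℕ) % 2 = 1).card) *
  y ^ (fdS (Tnk k (p+2)) g +
    (if topS' k p ∉ A ∧ A ≠ (PofG k p g).erase (topS' k p) then 1 else 0)) *
  z ^ siS (Tnk k (p+2)) g *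
  xb ^ ((A.filter fun a : ↥(Tnk k (p+2)) => (a : ℕ) % 2 = 0).card) *
  yb ^ (fiS (Tnk k (p+2)) g + (if A = (PofG k p g).erase (topS' k p) then 1 else 0)) *
  zb ^ sdS (Tnk k (p+2)) g

lemma innerFiberSum {R : Type} [CommRing R] {k p : ℕ}
    {g : ↥(Tnk k (p+2)) → ↥(Tnk k (p+2))} (hg : g ∈ Staircases (Tnk k (p+2)))
    (x y z xb yb zb : R) :
    ∑ A ∈ (PofG k p g).powerset.erase (PofG k p g), Wt R k p g x y z xb yb zb A
      = (y + xb) * ((x+1) ^ moS (Tnk k (p+2)) g * y ^ fdS (Tnk k (p+2)) g *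
          z ^ siS (Tnk k (p+2)) g * (xb+1) ^ meS (Tnk k (p+2)) g *
          yb ^ fiS (Tnk k (p+2)) g * zb ^ sdS (Tnk k (p+2)) g)
        + (yb - y - xb) * (x ^ moS (Tnk k (p+2)) g * y ^ fdS (Tnk k (p+2)) g *
          z ^ siS (Tnk k (p+2)) g * xb ^ meS (Tnk k (p+2)) g *
          yb ^ fiS (Tnk k (p+2)) g * zb ^ sdS (Tnk k (p+2)) g) := by
  set P := PofG k p g with hP
  set Q := P.erase (topS' k p) with hQ
  set C : R := y ^ fdS (Tnk k (p+2)) g * z ^ siS (Tnk k (p+2)) g *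
    yb ^ fiS (Tnk k (p+2)) g * zb ^ sdS (Tnk k (p+2)) g with hC
  set D : Finset ↥(Tnk k (p+2)) → R := fun B =>
    x ^ ((B.filter fun a : ↥(Tnk k (p+2)) => (a : ℕ) % 2 = 1).card) *
    xb ^ ((B.filter fun a : ↥(Tnk k (p+2)) => (a : ℕ) % 2 = 0).card) * C with hD
  have htP : topS' k p ∈ P := top'_mem_PofG hg
  have hPins : insert (topS' k p) Q = P := Finset.insert_erase htP
  have htQ : topS' k p ∉ Q := Finset.notMem_erase _ _
  -- the three evaluation lemmas
  have hWB : ∀ B ∈ Q.powerset, Wt R k p g x y z xb yb zb B =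
      y * D B + (if B = Q then (yb - y) * D B else 0) := by
    intro B hB
    have hBQ : B ⊆ Q := Finset.mem_powerset.1 hB
    have htB : topS' k p ∉ B := fun h => htQ (hBQ h)
    rw [Wt, hD]
    by_cases hBeq : B = Q
    · rw [if_pos hBeq, if_neg (by simp [hBeq]; exact fun _ => rfl), if_pos hBeq]
      ring
    · rw [if_neg hBeq, if_pos ⟨htB, hBeq⟩, if_neg hBeq]
      ring
  have hWins : ∀ B ∈ Q.powerset, Wt R k p g x y z xb yb zb (insert (topS' k p) B) =
      xb * D B := by
    intro B hB
    have hBQ : B ⊆ Q := Finset.mem_powerset.1 hB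
    have htB : topS' k p ∉ B := fun h => htQ (hBQ h)
    have hne : insert (topS' k p) B ≠ Q := by
      intro h
      exact htQ (h ▸ Finset.mem_insert_self _ _)
    have hodd : ((insert (topS' k p) B).filter
        fun a : ↥(Tnk k (p+2)) => (a : ℕ) % 2 = 1) =
        (B.filter fun a : ↥(Tnk k (p+2)) => (a : ℕ) % 2 = 1) := by
      rw [Finset.filter_insert, if_neg (by rw [topS'_val]; omega)]
    have heven : ((insert (topS' k p) B).filter
        fun a : ↥(Tnk k (p+2)) => (a : ℕ) % 2 = 0) =
        insert (topS' k p) (B.filter fun a : ↥(Tnk k (p+2)) => (a : ℕ) % 2 = 0) := by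
      rw [Finset.filter_insert, if_pos (by rw [topS'_val]; omega)]
    rw [Wt, hD, hodd, heven,
      Finset.card_insert_of_notMem (fun h => htB (Finset.mem_filter.1 h).1),
      if_neg (by simp [Finset.mem_insert_self]), if_neg hne]
    ring
  have hWP : Wt R k p g x y z xb yb zb P = xb * D Q := by
    rw [← hPins]
    exact hWins Q (Finset.mem_powerset_self Q)
  have hsumD : ∑ B ∈ Q.powerset, D B =
      (x+1) ^ ((Q.filter fun a : ↥(Tnk k (p+2)) => (a : ℕ) % 2 = 1).card) *
      (xb+1) ^ ((Q.filter fun a : ↥(Tnk k (p+2)) => (a : ℕ) % 2 = 0).card) * C := by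
    rw [hD, ← Finset.sum_mul]
    congr 1
    have hpr : ∀ B : Finset ↥(Tnk k (p+2)),
        (B.filter fun a : ↥(Tnk k (p+2)) => (a : ℕ) % 2 = 0) =
        (B.filter fun a : ↥(Tnk k (p+2)) => ¬ ((a : ℕ) % 2 = 1)) := by
      intro B
      apply Finset.filter_congr
      intro a ha
      constructor <;> (intro h; omega)
    simp only [hpr]
    exact sum_powerset_split x xb (fun a : ↥(Tnk k (p+2)) => (a : ℕ) % 2 = 1) Q
  have h1 : ∑ A ∈ P.powerset.erase P, Wt R k p g x y z xb yb zb A =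
      (∑ A ∈ P.powerset, Wt R k p g x y z xb yb zb A) - Wt R k p g x y z xb yb zb P := by
    rw [← Finset.sum_erase_add _ _ (Finset.mem_powerset_self P)]
    ring
  have h2 : ∑ A ∈ P.powerset, Wt R k p g x y z xb yb zb A =
      (∑ B ∈ Q.powerset, Wt R k p g x y z xb yb zb B) +
        ∑ B ∈ Q.powerset, Wt R k p g x y z xb yb zb (insert (topS' k p) B) := by
    rw [← hPins, Finset.sum_powerset_insert htQ]
  have h3 : ∑ B ∈ Q.powerset, Wt R k p g x y z xb yb zb B =
      y * (∑ B ∈ Q.powerset, D B) + (yb - y) * D Q := by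
    rw [Finset.sum_congr rfl hWB, Finset.sum_add_distrib, ← Finset.mul_sum,
      Finset.sum_ite_eq' Q.powerset Q (fun B => (yb - y) * D B),
      if_pos (Finset.mem_powerset_self Q)]
  have h4 : ∑ B ∈ Q.powerset, Wt R k p g x y z xb yb zb (insert (topS' k p) B) =
      xb * (∑ B ∈ Q.powerset, D B) := by
    rw [Finset.sum_congr rfl hWins, ← Finset.mul_sum]
  rw [h1, h2, h3, h4, hWP, hsumD, moS'_eq hg, meS'_eq hg, hD, hC]
  ring

end Assemble

theorem lam_rec (R : Type) [CommRing R] (k p : ℕ) (x y z xb yb zb : R) :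
    Lam R (Tnk k (p+3)) x y z xb yb zb
      = (y + xb) * Lam R (Tnk k (p+2)) (x+1) y z (xb+1) yb zb
        + (yb - y - xb) * Lam R (Tnk k (p+2)) x y z xb yb zb := by
  rw [Lam, Lam, Lam, Finset.mul_sum, Finset.mul_sum, ← Finset.sum_add_distrib]
  rw [← Finset.sum_fiberwise_of_maps_to (g := projf k p)
    (t := Staircases (Tnk k (p+2))) (fun f hf => projf_mem_Staircases hf)]
  apply Finset.sum_congr rfl
  intro g hg
  have hbij : ∑ f ∈ (Staircases (Tnk k (p+3))).filter (fun f => projf k p f = g),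
      x ^ moS (Tnk k (p+3)) f * y ^ fdS (Tnk k (p+3)) f * z ^ siS (Tnk k (p+3)) f *
        xb ^ meS (Tnk k (p+3)) f * yb ^ fiS (Tnk k (p+3)) f * zb ^ sdS (Tnk k (p+3)) f
      = ∑ A ∈ (PofG k p g).powerset.erase (PofG k p g), Wt R k p g x y z xb yb zb A := by
    refine Finset.sum_bij' (i := fun f _ => AofF k p f) (j := fun A _ => extf k p g A)
      ?_ ?_ ?_ ?_ ?_
    · intro f hf
      obtain ⟨hfS, hfg⟩ := Finset.mem_filter.1 hf
      have h2 := AofF_mem hfS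
      rwa [hfg] at h2
    · intro A hA
      rw [Finset.mem_filter]
      exact ⟨extf_mem_Staircases hg hA,
        projf_extf (Finset.mem_powerset.1 (Finset.mem_erase.1 hA).2)⟩
    · intro f hf
      obtain ⟨hfS, hfg⟩ := Finset.mem_filter.1 hf
      beta_reduce
      rw [← hfg]
      exact extf_projf hfS
    · intro A hA
      exact AofF_extf
    · intro f hf
      obtain ⟨hfS, hfg⟩ := Finset.mem_filter.1 hf
      beta_reduce
      rw [Wt, moS_eq (f := f), meS_eq (f := f), siS_eq hfS, sdS_eq hfS, fiS_eq hfS,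
        fdS_eq hfS, hfg]
  rw [hbij, innerFiberSum hg]

section ClosedForm

/-- Complete homogeneous-type polynomials: `Hcomp R g d p` is the sum over all monomials of
degree `d` in `g 0, …, g (p-1)` (with the first-variable removal recurrence). -/
def Hcomp (R : Type) [CommRing R] : (ℕ → R) → ℕ → ℕ → R
  | _, 0, _ => 1
  | _, _+1, 0 => 0
  | g, d+1, p+1 => Hcomp R (fun i => g (i+1)) (d+1) p + g 0 * Hcomp R g d (p+1)
termination_by _ d p => d + p
decreasing_by all_goals omega

variable {R : Type} [CommRing R]

@[simp] lemma Hcomp_zero (g : ℕ → R) (p : ℕ) : Hcomp R g 0 p = 1 := by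
  cases p <;> simp [Hcomp]

@[simp] lemma Hcomp_succ_zero (g : ℕ → R) (d : ℕ) : Hcomp R g (d+1) 0 = 0 := by
  simp [Hcomp]

lemma Hcomp_succ_succ (g : ℕ → R) (d p : ℕ) :
    Hcomp R g (d+1) (p+1) =
      Hcomp R (fun i => g (i+1)) (d+1) p + g 0 * Hcomp R g d (p+1) := by
  rw [Hcomp]

theorem lam_closed (k : ℕ) (y z yb zb : R) :
    ∀ m : ℕ, ∀ x xb : R,
      Lam R (Tnk k (m+2)) x y z xb yb zb =
        ∑ i ∈ Finset.range (m+1),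
          (∏ j ∈ Finset.range i, (y + xb + (j : R))) *
            Lam R (Tnk k 2) (x + (i : R)) y z (xb + (i : R)) yb zb *
            Hcomp R (fun i => yb - y - (xb + (i : R))) (m - i) (i + 1) := by
  intro m
  induction m with
  | zero =>
    intro x xb
    simp
  | succ m ih =>
    intro x xb
    have hrec := lam_rec R k m x y z xb yb zb
    rw [show m + 3 = (m + 1) + 2 by omega] at hrec
    rw [hrec, ih (x+1) (xb+1), ih x xb]
    -- identify the two shifted γ-sequences
    have hgsh : (fun i : ℕ => yb - y - ((xb + 1) + (i : R))) =
        (fun i : ℕ => (fun i : ℕ => yb - y - (xb + (i : R))) (i + 1)) := by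
      funext i
      push_cast
      ring
    -- RHS: peel the last term and apply the Hcomp recurrence to the others
    rw [Finset.sum_range_succ (n := m + 1)]
    have hlast : (∏ j ∈ Finset.range (m+1), (y + xb + (j : R))) *
        Lam R (Tnk k 2) (x + ((m+1 : ℕ) : R)) y z (xb + ((m+1 : ℕ) : R)) yb zb *
        Hcomp R (fun i => yb - y - (xb + (i : R))) ((m+1) - (m+1)) ((m+1) + 1)
        = (y + xb) * ((∏ j ∈ Finset.range m, (y + (xb+1) + (j : R))) *
            Lam R (Tnk k 2) ((x+1) + (m : R)) y z ((xb+1) + (m : R)) yb zb *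
            Hcomp R (fun i => yb - y - ((xb + 1) + (i : R))) (m - m) (m + 1)) := by
      rw [Nat.sub_self, Nat.sub_self, Hcomp_zero, Hcomp_zero, mul_one, mul_one,
        Finset.prod_range_succ']
      have hc1 : ((m+1 : ℕ) : R) = (m : R) + 1 := by push_cast; ring
      have hc2 : ∀ j : ℕ, (y + xb + ((j+1 : ℕ) : R)) = (y + (xb+1) + (j : R)) := by
        intro j; push_cast; ring
      rw [Finset.prod_congr rfl (fun j _ => hc2 j), hc1]
      have hA : x + ((m : R) + 1) = x + 1 + (m : R) := by ring
      have hB : xb + ((m : R) + 1) = xb + 1 + (m : R) := by ring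
      rw [hA, hB]
      ring
    rw [hlast]
    have hmid : ∀ i ∈ Finset.range (m+1),
        (∏ j ∈ Finset.range i, (y + xb + (j : R))) *
          Lam R (Tnk k 2) (x + (i : R)) y z (xb + (i : R)) yb zb *
          Hcomp R (fun i => yb - y - (xb + (i : R))) ((m+1) - i) (i + 1)
        = ((∏ j ∈ Finset.range i, (y + xb + (j : R))) *
            Lam R (Tnk k 2) (x + (i : R)) y z (xb + (i : R)) yb zb *
            Hcomp R (fun i => yb - y - (xb + ((i+1 : ℕ) : R))) (m + 1 - i) i)
          + (yb - y - xb) *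
            ((∏ j ∈ Finset.range i, (y + xb + (j : R))) *
              Lam R (Tnk k 2) (x + (i : R)) y z (xb + (i : R)) yb zb *
              Hcomp R (fun i => yb - y - (xb + (i : R))) (m - i) (i + 1)) := by
      intro i hi
      rw [Finset.mem_range] at hi
      have h1 : (m + 1) - i = (m - i) + 1 := by omega
      rw [h1, Hcomp_succ_succ]
      have h2 : (fun j : ℕ => (fun i : ℕ => yb - y - (xb + (i : R))) (j + 1)) =
          (fun j : ℕ => yb - y - (xb + ((j+1 : ℕ) : R))) := by
        funext j; push_cast; ring
      have h3 : (yb - y - (xb + ((0 : ℕ) : R))) = yb - y - xb := by push_cast; ring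
      rw [h2]
      have h4 : m + 1 - i = m - i + 1 := h1
      rw [← h4, h3]
      ring
    rw [Finset.sum_congr rfl hmid, Finset.sum_add_distrib]
    -- the (yb - y - xb) part matches
    have hsplit2 : ∑ i ∈ Finset.range (m+1), (yb - y - xb) *
        ((∏ j ∈ Finset.range i, (y + xb + (j : R))) *
          Lam R (Tnk k 2) (x + (i : R)) y z (xb + (i : R)) yb zb *
          Hcomp R (fun i => yb - y - (xb + (i : R))) (m - i) (i + 1))
        = (yb - y - xb) * ∑ i ∈ Finset.range (m+1),
          ((∏ j ∈ Finset.range i, (y + xb + (j : R))) *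
            Lam R (Tnk k 2) (x + (i : R)) y z (xb + (i : R)) yb zb *
            Hcomp R (fun i => yb - y - (xb + (i : R))) (m - i) (i + 1)) := by
      rw [Finset.mul_sum]
    rw [hsplit2]
    -- remaining: first sum equals (y+xb) * shifted sum
    have hfirst : ∑ i ∈ Finset.range (m+1),
        ((∏ j ∈ Finset.range i, (y + xb + (j : R))) *
          Lam R (Tnk k 2) (x + (i : R)) y z (xb + (i : R)) yb zb *
          Hcomp R (fun i => yb - y - (xb + ((i+1 : ℕ) : R))) (m + 1 - i) i)
        = (y + xb) * ∑ i ∈ Finset.range m,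
          ((∏ j ∈ Finset.range i, (y + (xb+1) + (j : R))) *
            Lam R (Tnk k 2) ((x+1) + (i : R)) y z ((xb+1) + (i : R)) yb zb *
            Hcomp R (fun i => yb - y - ((xb + 1) + (i : R))) (m - i) (i + 1)) := by
      rw [Finset.sum_range_succ' _ m]
      have hz : (∏ j ∈ Finset.range 0, (y + xb + (j : R))) *
          Lam R (Tnk k 2) (x + ((0:ℕ) : R)) y z (xb + ((0:ℕ) : R)) yb zb *
          Hcomp R (fun i => yb - y - (xb + ((i+1 : ℕ) : R))) (m + 1 - 0) 0 = 0 := by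
        rw [Nat.sub_zero, Hcomp_succ_zero, mul_zero]
      rw [hz, add_zero, Finset.mul_sum]
      apply Finset.sum_congr rfl
      intro i hi
      rw [Finset.mem_range] at hi
      have h1 : m + 1 - (i + 1) = m - i := by omega
      rw [h1, Finset.prod_range_succ']
      have hc2 : ∀ j : ℕ, (y + xb + ((j+1 : ℕ) : R)) = (y + (xb+1) + (j : R)) := by
        intro j; push_cast; ring
      rw [Finset.prod_congr rfl (fun j _ => hc2 j)]
      have hc3 : (x + ((i+1 : ℕ) : R)) = ((x+1) + (i : R)) := by push_cast; ring
      have hc4 : (xb + ((i+1 : ℕ) : R)) = ((xb+1) + (i : R)) := by push_cast; ring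
      have hc5 : (fun j : ℕ => yb - y - (xb + ((j+1 : ℕ) : R))) =
          (fun j : ℕ => yb - y - ((xb + 1) + (j : R))) := by
        funext j; push_cast; ring
      rw [hc3, hc4, hc5]
      have hc6 : (y + xb + ((0:ℕ) : R)) = (y + xb) := by push_cast; ring
      rw [hc6]
      ring
    rw [hfirst]
    conv_lhs => rw [Finset.sum_range_succ]
    ring
end ClosedForm

section PS

variable {R : Type} [CommRing R]

lemma mk_Hcomp_inv : ∀ (q : ℕ) (g : ℕ → R),
    (∏ i ∈ Finset.range q, (1 - PowerSeries.C (g i) * PowerSeries.X)) *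
      PowerSeries.mk (fun d => Hcomp R g d q) = 1 := by
  intro q
  induction q with
  | zero =>
    intro g
    rw [Finset.range_zero, Finset.prod_empty, one_mul]
    ext d
    cases d <;> simp [PowerSeries.coeff_one]
  | succ q ih =>
    intro g
    rw [Finset.prod_range_succ']
    have key : (1 - PowerSeries.C (g 0) * PowerSeries.X) *
        PowerSeries.mk (fun d => Hcomp R g d (q+1))
        = PowerSeries.mk (fun d => Hcomp R (fun i => g (i+1)) d q) := by
      ext d
      rw [sub_mul, one_mul, map_sub]
      cases d with
      | zero =>
        rw [mul_assoc, PowerSeries.coeff_C_mul, PowerSeries.coeff_zero_X_mul, mul_zero,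
          sub_zero, PowerSeries.coeff_mk, PowerSeries.coeff_mk, Hcomp_zero, Hcomp_zero]
      | succ d =>
        rw [mul_assoc, PowerSeries.coeff_C_mul, PowerSeries.coeff_succ_X_mul,
          PowerSeries.coeff_mk, PowerSeries.coeff_mk, PowerSeries.coeff_mk,
          Hcomp_succ_succ]
        ring
    rw [mul_assoc]
    rw [show (1 - PowerSeries.C (g 0) * PowerSeries.X) *
        PowerSeries.mk (fun d => Hcomp R g d (q+1)) =
        PowerSeries.mk (fun d => Hcomp R (fun i => g (i+1)) d q) from key]
    exact ih (fun i => g (i+1))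

lemma invOfUnit_prod_eq (g : ℕ → R) (q : ℕ) :
    PowerSeries.invOfUnit
        (∏ i ∈ Finset.range q, (1 - PowerSeries.C (g i) * PowerSeries.X)) 1
      = PowerSeries.mk (fun d => Hcomp R g d q) := by
  set F := ∏ i ∈ Finset.range q, (1 - PowerSeries.C (g i) * PowerSeries.X) with hF
  have hc : PowerSeries.constantCoeff F = 1 := by
    rw [hF, map_prod]
    rw [Finset.prod_congr rfl (fun i _ => by
      rw [map_sub, map_one, map_mul, PowerSeries.constantCoeff_X, mul_zero, sub_zero])]
    rw [Finset.prod_const_one]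
  have h1 : F * PowerSeries.invOfUnit F 1 = 1 :=
    PowerSeries.mul_invOfUnit F 1 (by rw [hc, Units.val_one])
  have h2 : F * PowerSeries.mk (fun d => Hcomp R g d q) = 1 := mk_Hcomp_inv q g
  calc PowerSeries.invOfUnit F 1
      = PowerSeries.invOfUnit F 1 * (F * PowerSeries.mk (fun d => Hcomp R g d q)) := by
        rw [h2, mul_one]
    _ = (F * PowerSeries.invOfUnit F 1) * PowerSeries.mk (fun d => Hcomp R g d q) := by
        ring
    _ = PowerSeries.mk (fun d => Hcomp R g d q) := by rw [h1, one_mul]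

lemma coeff_term (g : ℕ → R) (c : R) (q N : ℕ) (h : q ≤ N) :
    PowerSeries.coeff N (PowerSeries.C c * PowerSeries.X ^ q *
      PowerSeries.invOfUnit
        (∏ i ∈ Finset.range q, (1 - PowerSeries.C (g i) * PowerSeries.X)) 1)
      = c * Hcomp R g (N - q) q := by
  rw [invOfUnit_prod_eq, mul_assoc, PowerSeries.coeff_C_mul,
    PowerSeries.coeff_X_pow_mul', if_pos h, PowerSeries.coeff_mk]

end PS

lemma lam_T1 {R : Type} [CommRing R] (k : ℕ) (hk : 1 ≤ k) (x y z xb yb zb : R) :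
    Lam R (Tnk k 1) x y z xb yb zb = 1 := by
  have hsnd := sndEvenMax_Tnk_one k
  have hpos : ∀ a : ↥(Tnk k 1), 1 ≤ (a : ℕ) := by
    intro a
    have h2 := a.2
    rw [mem_Tnk] at h2
    omega
  have hmo : ∀ f, moS (Tnk k 1) f = 0 := by
    intro f
    rw [moS, Finset.card_eq_zero, Finset.filter_eq_empty_iff]
    intro a _
    rw [hsnd]
    rintro ⟨h1, -⟩
    have := hpos a
    omega
  have hme : ∀ f, meS (Tnk k 1) f = 0 := by
    intro f
    rw [meS, Finset.card_eq_zero, Finset.filter_eq_empty_iff]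
    intro a _
    rw [hsnd]
    rintro ⟨h1, -⟩
    have := hpos a
    omega
  have hfi : ∀ f, fiS (Tnk k 1) f = 0 := by
    intro f
    rw [fiS, Finset.card_eq_zero, Finset.filter_eq_empty_iff]
    intro a _
    rintro ⟨⟨h1, -⟩, -⟩
    rw [hsnd] at h1
    have := hpos a
    omega
  have hfd : ∀ f, fdS (Tnk k 1) f = 0 := by
    intro f
    rw [fdS, Finset.card_eq_zero, Finset.filter_eq_empty_iff]
    intro a _
    rintro ⟨⟨h1, -⟩, -⟩
    rw [hsnd] at h1
    have := hpos a
    omega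
  have hsi : ∀ f, siS (Tnk k 1) f = 0 := by
    intro f
    rw [siS, Finset.card_eq_zero, Finset.filter_eq_empty_iff]
    intro a _
    rintro ⟨⟨h1, -⟩, -⟩
    rw [hsnd] at h1
    have := hpos a
    omega
  have hsd : ∀ f, sdS (Tnk k 1) f = 0 := by
    intro f
    rw [sdS, Finset.card_eq_zero, Finset.filter_eq_empty_iff]
    intro a _
    rintro ⟨⟨h1, -⟩, -⟩
    rw [hsnd] at h1
    have := hpos a
    omega
  have h2k : 2*k ∈ Tnk k 1 := mem_Tnk.2 (Or.inr ⟨by omega, le_refl _, by omega⟩)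
  have hone : Staircases (Tnk k 1) = {fun _ => (⟨2*k, h2k⟩ : ↥(Tnk k 1))} := by
    ext f
    rw [Finset.mem_singleton, mem_Staircases_iff]
    constructor
    · rintro ⟨hexc, -⟩
      funext a
      apply Subtype.ext
      have h1 := (hexc a).2
      have h2 := (f a).2
      rw [mem_Tnk] at h2
      rw [Nat.even_iff] at h1
      show ((f a) : ℕ) = 2*k
      omega
    · rintro rfl
      constructor
      · intro a
        have h2 := a.2
        rw [mem_Tnk] at h2
        exact ⟨by show (a : ℕ) ≤ 2*k; omega, ⟨k, by ring⟩⟩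
      · intro b hbe
        refine ⟨b, ?_⟩
        apply Subtype.ext
        have h2 := b.2
        rw [mem_Tnk] at h2
        rw [Nat.even_iff] at hbe
        show 2*k = (b : ℕ)
        omega
  rw [Lam, hone, Finset.sum_singleton, hmo, hme, hfi, hfd, hsi, hsd]
  simp

open PowerSeries in
/-- The generating function formula
`∑_{n≥1} Λ_{T_n^k} u^{n-1} = 1 + ∑_{n≥2} (y+x̄)^{(n-2)} Λ_{T_2^k}(x+n-2, x̄+n-2) u^{n-1}
/ ∏_{i=0}^{n-2} (1 - (ȳ - y - (x̄+i)) u)`, stated coefficientwise (the coefficient of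
`u^N` of the `n`-th summand on the right vanishes for `n > N+1`). -/
theorem lam_Tnk_generating_function (k : ℕ) (hk : 1 ≤ k)
    (x y z xb yb zb : MvPolynomial (Fin 6) ℤ)
    (hx : x = MvPolynomial.X 0) (hy : y = MvPolynomial.X 1) (hz : z = MvPolynomial.X 2)
    (hxb : xb = MvPolynomial.X 3) (hyb : yb = MvPolynomial.X 4)
    (hzb : zb = MvPolynomial.X 5) :
    ∀ N : ℕ,
      (PowerSeries.coeff N) (PowerSeries.mk fun j =>
          Lam (MvPolynomial (Fin 6) ℤ) (Tnk k (j + 1)) x y z xb yb zb) =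
      (PowerSeries.coeff N) (1 : PowerSeries (MvPolynomial (Fin 6) ℤ)) +
      ∑ n ∈ Finset.Icc 2 (N + 1), (PowerSeries.coeff N)
        ((PowerSeries.C) ((∏ j ∈ Finset.range (n - 2), (y + xb + (j : _))) *
              Lam (MvPolynomial (Fin 6) ℤ) (Tnk k 2)
                (x + ((n - 2 : ℕ) : _)) y z (xb + ((n - 2 : ℕ) : _)) yb zb) *
          PowerSeries.X ^ (n - 1) *
          PowerSeries.invOfUnit
            (∏ i ∈ Finset.range (n - 1),
              (1 - (PowerSeries.C) (yb - y - (xb + (i : _))) * PowerSeries.X)) 1) := by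
  intro N
  rw [PowerSeries.coeff_mk]
  cases N with
  | zero =>
    rw [lam_T1 k hk, Finset.Icc_eq_empty (by omega), Finset.sum_empty, add_zero,
      PowerSeries.coeff_one, if_pos rfl]
  | succ N' =>
    have h1 : (PowerSeries.coeff (N'+1))
        (1 : PowerSeries (MvPolynomial (Fin 6) ℤ)) = 0 := by
      rw [PowerSeries.coeff_one, if_neg (by omega)]
    rw [h1, zero_add]
    rw [show (N' + 1 + 1 : ℕ) = N' + 2 from rfl]
    rw [lam_closed k y z yb zb N' x xb]
    rw [show Finset.Icc 2 (N'+2) = Finset.Ico 2 (N'+3) from (Finset.Ico_add_one_right_eq_Icc _ _).symm]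
    rw [Finset.sum_Ico_eq_sum_range]
    rw [show N'+3-2 = N'+1 from by omega]
    apply Finset.sum_congr rfl
    intro i hi
    rw [Finset.mem_range] at hi
    have e1 : 2+i-2 = i := by omega
    have e2 : 2+i-1 = i+1 := by omega
    rw [e1, e2, coeff_term (fun j : ℕ => yb - y - (xb + (j : MvPolynomial (Fin 6) ℤ)))
      _ (i+1) (N'+1) (by omega)]
    rw [show N'+1-(i+1) = N'-i from by omega]

end
end
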